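/- arXiv:0801.3629 — 7 statements merged into one kernel-verified Lean document; each statement's English description precedes it below -/
import Mathlib

section
/- Let f be analytic on the unit disk D. Then the function φ(r) = r^{-1} · sup_{|z|<r} |f(z) - f(0)| is strictly increasing for 0 < r < 1, unless f is linear (f(z) = az + b), in which case φ is constant. Moreover lim_{r→0} φ(r) = |f'(0)|. -/
open Metric Set Filter

private lemma schwarz_attain {f : ℂ → ℂ} (hf : DifferentiableOn ℂ f (ball (0 : ℂ) 1))
    {r : ℝ} (hr0 : 0 < r) (hr1 : r < 1) :
    ∃ z₁ ∈ closedBall (0 : ℂ) r,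
      (∀ z ∈ closedBall (0 : ℂ) r, ‖f z - f 0‖ ≤ ‖f z₁ - f 0‖) ∧
      sSup ((fun z => ‖f z - f 0‖) '' ball (0 : ℂ) r) = ‖f z₁ - f 0‖ := by
  have hsub : closedBall (0 : ℂ) r ⊆ ball (0 : ℂ) 1 := closedBall_subset_ball hr1
  have hcont : ContinuousOn (fun z => ‖f z - f 0‖) (closedBall (0 : ℂ) r) :=
    ((hf.continuousOn.sub continuousOn_const).mono hsub).norm
  obtain ⟨z₁, hz₁, hmax⟩ := (isCompact_closedBall (0 : ℂ) r).exists_isMaxOn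
    (nonempty_closedBall.2 hr0.le) hcont
  have hmax' : ∀ z ∈ closedBall (0 : ℂ) r, ‖f z - f 0‖ ≤ ‖f z₁ - f 0‖ := fun z hz => hmax hz
  refine ⟨z₁, hz₁, hmax', ?_⟩
  have hbdd : BddAbove ((fun z => ‖f z - f 0‖) '' ball (0 : ℂ) r) := by
    refine ⟨‖f z₁ - f 0‖, ?_⟩
    rintro y ⟨z, hz, rfl⟩
    exact hmax' z (ball_subset_closedBall hz)
  apply le_antisymm
  · apply csSup_le ((nonempty_ball.2 hr0).image _)
    rintro y ⟨z, hz, rfl⟩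
    exact hmax' z (ball_subset_closedBall hz)
  · have hball : ∀ t : ℝ, t ∈ Set.Ico (0 : ℝ) 1 → (t : ℂ) * z₁ ∈ ball (0 : ℂ) r := by
      intro t ht
      rw [mem_ball_zero_iff]
      have h1 : ‖(t : ℂ) * z₁‖ = t * ‖z₁‖ := by
        rw [norm_mul, Complex.norm_real, Real.norm_of_nonneg ht.1]
      have h2 : ‖z₁‖ ≤ r := mem_closedBall_zero_iff.1 hz₁
      nlinarith [ht.1, ht.2, norm_nonneg z₁]
    have hcz : ContinuousAt f z₁ := hf.differentiableAt (isOpen_ball.mem_nhds (hsub hz₁))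
      |>.continuousAt
    have hto : Tendsto (fun t : ℝ => ‖f ((t : ℂ) * z₁) - f 0‖) (nhdsWithin 1 (Set.Iio 1))
        (nhds ‖f z₁ - f 0‖) := by
      have hca : ContinuousAt (fun t : ℝ => ‖f ((t : ℂ) * z₁) - f 0‖) 1 := by
        have hmul : ContinuousAt (fun t : ℝ => (t : ℂ) * z₁) 1 :=
          (Complex.continuous_ofReal.mul continuous_const).continuousAt
        have hcz' : ContinuousAt f (((1 : ℝ) : ℂ) * z₁) := by simpa using hcz
        have hcomp : ContinuousAt (fun t : ℝ => f ((t : ℂ) * z₁)) 1 :=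
          ContinuousAt.comp (x := (1 : ℝ)) hcz' hmul
        exact (hcomp.sub continuousAt_const).norm
      have := hca.tendsto
      simp only [Complex.ofReal_one, one_mul] at this
      exact this.mono_left nhdsWithin_le_nhds
    refine le_of_tendsto hto ?_
    filter_upwards [Ico_mem_nhdsLT zero_lt_one] with t ht
    exact le_csSup hbdd ⟨_, hball t ht, rfl⟩

private lemma schwarz_linear_ext {f : ℂ → ℂ} (hf : DifferentiableOn ℂ f (ball (0 : ℂ) 1))
    {s : ℝ} (hs0 : 0 < s) {a b : ℂ} (h : ∀ z ∈ ball (0 : ℂ) s, f z = a * z + b) :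
    ∀ z ∈ ball (0 : ℂ) 1, f z = a * z + b := by
  have h1 : AnalyticOnNhd ℂ f (ball (0 : ℂ) 1) := hf.analyticOnNhd isOpen_ball
  have h2 : AnalyticOnNhd ℂ (fun z => a * z + b) (ball (0 : ℂ) 1) :=
    (analyticOnNhd_const.mul analyticOnNhd_id).add analyticOnNhd_const
  intro z hz
  exact h1.eqOn_of_preconnected_of_eventuallyEq h2 (convex_ball _ _).isPreconnected
    (mem_ball_self one_pos) (eventually_of_mem (ball_mem_nhds _ hs0) h) hz

private lemma norm_sub_dslope (f : ℂ → ℂ) (z : ℂ) :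
    ‖f z - f 0‖ = ‖dslope f 0 z‖ * ‖z‖ := by
  rcases eq_or_ne z 0 with rfl | hz
  · simp
  · rw [dslope_of_ne _ hz, slope_def_field, sub_zero, norm_div,
      div_mul_cancel₀ _ (norm_ne_zero_iff.2 hz)]

private lemma schwarz_strict {f : ℂ → ℂ} (hf : DifferentiableOn ℂ f (ball (0 : ℂ) 1))
    (hnl : ¬ ∃ a b : ℂ, ∀ z ∈ ball (0 : ℂ) 1, f z = a * z + b)
    {r s : ℝ} (hr : r ∈ Set.Ioo (0 : ℝ) 1) (hs : s ∈ Set.Ioo (0 : ℝ) 1) (hrs : r < s) :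
    r⁻¹ * sSup ((fun z => ‖f z - f 0‖) '' ball (0 : ℂ) r) <
      s⁻¹ * sSup ((fun z => ‖f z - f 0‖) '' ball (0 : ℂ) s) := by
  obtain ⟨z₁, hz₁, hmaxr, hMr⟩ := schwarz_attain hf hr.1 hr.2
  obtain ⟨w₁, hw₁, hmaxs, hMs⟩ := schwarz_attain hf hs.1 hs.2
  rw [hMr, hMs]
  -- Ms > 0
  have hMs_pos : 0 < ‖f w₁ - f 0‖ := by
    rcases (norm_nonneg (f w₁ - f 0)).lt_or_eq with h | h
    · exact h
    · exfalso
      apply hnl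
      refine ⟨0, f 0, schwarz_linear_ext hf hs.1 (a := 0) (b := f 0) ?_⟩
      intro z hz
      have h1 : ‖f z - f 0‖ ≤ ‖f w₁ - f 0‖ := hmaxs z (ball_subset_closedBall hz)
      rw [← h] at h1
      have hz0 : f z = f 0 := by
        have h0 : ‖f z - f 0‖ = 0 := le_antisymm h1 (norm_nonneg _)
        rwa [norm_eq_zero, sub_eq_zero] at h0
      simp [hz0]
  -- f maps ball s strictly inside ball (f 0) Ms
  have hsub_s : ball (0 : ℂ) s ⊆ ball (0 : ℂ) 1 := ball_subset_ball hs.2.le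
  have hmaps : MapsTo f (ball (0 : ℂ) s) (ball (f 0) ‖f w₁ - f 0‖) := by
    intro z hz
    rw [mem_ball, dist_eq_norm]
    rcases (hmaxs z (ball_subset_closedBall hz)).lt_or_eq with h | h
    · exact h
    · exfalso
      have hgd : DifferentiableOn ℂ (fun w => f w - f 0) (ball (0 : ℂ) s) :=
        (hf.mono hsub_s).sub (differentiableOn_const _)
      have hm : IsMaxOn (norm ∘ fun w => f w - f 0) (ball (0 : ℂ) s) z := by
        intro w hw
        simp only [Function.comp_apply]
        calc ‖f w - f 0‖ ≤ ‖f w₁ - f 0‖ := hmaxs w (ball_subset_closedBall hw)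
          _ = ‖f z - f 0‖ := h.symm
      have heq := Complex.eqOn_of_isPreconnected_of_isMaxOn_norm
        (convex_ball (0 : ℂ) s).isPreconnected isOpen_ball hgd hz hm
        (mem_ball_self hs.1)
      simp only [Function.const_apply, sub_self] at heq
      rw [← h, ← heq] at hMs_pos
      simp at hMs_pos
  have hsch : ∀ z ∈ ball (0 : ℂ) s, ‖dslope f 0 z‖ ≤ ‖f w₁ - f 0‖ / s := fun z hz =>
    Complex.norm_dslope_le_div_of_mapsTo_ball (hf.mono hsub_s) (hmaps.mono_right ball_subset_closedBall) hz
  by_contra hcon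
  push_neg at hcon
  -- Mr > 0
  have hMr_pos : 0 < ‖f z₁ - f 0‖ := by
    by_contra h
    push_neg at h
    have h1 : s⁻¹ * ‖f w₁ - f 0‖ ≤ 0 := hcon.trans
      (mul_nonpos_of_nonneg_of_nonpos (inv_nonneg.2 hr.1.le) h)
    nlinarith [inv_pos.2 hs.1]
  have hz₁0 : z₁ ≠ 0 := by
    rintro rfl
    simp at hMr_pos
  have hz₁norm : 0 < ‖z₁‖ := norm_pos_iff.2 hz₁0
  have hz₁le : ‖z₁‖ ≤ r := mem_closedBall_zero_iff.1 hz₁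
  have hz₁s : z₁ ∈ ball (0 : ℂ) s := mem_ball_zero_iff.2 (hz₁le.trans_lt hrs)
  have hdse : ‖dslope f 0 z₁‖ = ‖f w₁ - f 0‖ / s := by
    refine le_antisymm (hsch z₁ hz₁s) ?_
    have h1 : ‖dslope f 0 z₁‖ = ‖f z₁ - f 0‖ / ‖z₁‖ := by
      rw [norm_sub_dslope f z₁, mul_div_cancel_right₀ _ hz₁norm.ne']
    rw [h1]
    calc ‖f w₁ - f 0‖ / s = s⁻¹ * ‖f w₁ - f 0‖ := by ring
      _ ≤ r⁻¹ * ‖f z₁ - f 0‖ := hcon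
      _ = ‖f z₁ - f 0‖ / r := by ring
      _ ≤ ‖f z₁ - f 0‖ / ‖z₁‖ := by gcongr
  have haff := Complex.affine_of_mapsTo_ball_of_exists_norm_dslope_eq_div
    (hf.mono hsub_s) (hmaps.mono_right ball_subset_closedBall) hz₁s hdse
  apply hnl
  refine ⟨dslope f 0 z₁, f 0, schwarz_linear_ext hf hs.1 ?_⟩
  intro z hz
  have := haff hz
  simp only [sub_zero, smul_eq_mul] at this
  rw [this]; ring

private lemma schwarz_linear_phi {f : ℂ → ℂ} {a b : ℂ}
    (hab : ∀ z ∈ ball (0 : ℂ) 1, f z = a * z + b) {r : ℝ} (hr : r ∈ Set.Ioo (0 : ℝ) 1) :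
    r⁻¹ * sSup ((fun z => ‖f z - f 0‖) '' ball (0 : ℂ) r) = ‖a‖ := by
  have hf0 : f 0 = b := by simpa using hab 0 (mem_ball_self one_pos)
  have himg : ((fun z => ‖f z - f 0‖) '' ball (0 : ℂ) r) =
      ((fun z : ℂ => ‖a‖ * ‖z‖) '' ball (0 : ℂ) r) := by
    apply Set.image_congr
    intro z hz
    rw [hab z (ball_subset_ball hr.2.le hz), hf0]
    simp [norm_mul]
  rw [himg]
  have hsup : sSup ((fun z : ℂ => ‖a‖ * ‖z‖) '' ball (0 : ℂ) r) = ‖a‖ * r := by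
    have hbdd : BddAbove ((fun z : ℂ => ‖a‖ * ‖z‖) '' ball (0 : ℂ) r) := by
      refine ⟨‖a‖ * r, ?_⟩
      rintro y ⟨z, hz, rfl⟩
      exact mul_le_mul_of_nonneg_left (mem_ball_zero_iff.1 hz).le (norm_nonneg a)
    apply le_antisymm
    · apply csSup_le ((nonempty_ball.2 hr.1).image _)
      rintro y ⟨z, hz, rfl⟩
      exact mul_le_mul_of_nonneg_left (mem_ball_zero_iff.1 hz).le (norm_nonneg a)
    · have hto : Tendsto (fun t : ℝ => ‖a‖ * t) (nhdsWithin r (Set.Iio r)) (nhds (‖a‖ * r)) :=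
        ((continuous_const.mul continuous_id).tendsto r).mono_left nhdsWithin_le_nhds
      refine le_of_tendsto hto ?_
      filter_upwards [Ico_mem_nhdsLT hr.1] with t ht
      refine le_csSup hbdd ⟨(t : ℂ), ?_, ?_⟩
      · rw [mem_ball_zero_iff, Complex.norm_real, Real.norm_of_nonneg ht.1]
        exact ht.2
      · show ‖a‖ * ‖((t : ℝ) : ℂ)‖ = ‖a‖ * t
        rw [Complex.norm_real, Real.norm_of_nonneg ht.1]
  rw [hsup, mul_comm, mul_assoc, mul_inv_cancel₀ hr.1.ne', mul_one]

private lemma schwarz_tendsto {f : ℂ → ℂ} (hf : DifferentiableOn ℂ f (ball (0 : ℂ) 1)) :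
    Tendsto (fun r : ℝ => r⁻¹ * sSup ((fun z => ‖f z - f 0‖) '' ball (0 : ℂ) r))
      (nhdsWithin 0 (Set.Ioi 0)) (nhds ‖deriv f 0‖) := by
  set L := ‖deriv f 0‖ with hL
  rw [Metric.tendsto_nhdsWithin_nhds]
  intro ε hε
  have hd : DifferentiableOn ℂ (dslope f 0) (ball (0 : ℂ) 1) :=
    (Complex.differentiableOn_dslope (ball_mem_nhds _ one_pos)).mpr hf
  have hc : ContinuousAt (dslope f 0) 0 :=
    (hd.differentiableAt (isOpen_ball.mem_nhds (mem_ball_self one_pos))).continuousAt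
  have hc' : Tendsto (fun z => ‖dslope f 0 z‖) (nhds (0 : ℂ)) (nhds L) := by
    have := hc.norm.tendsto
    simpa [dslope_same] using this
  have hev : ∀ᶠ z in nhds (0 : ℂ), |‖dslope f 0 z‖ - L| < ε / 2 := by
    have := Metric.tendsto_nhds.mp hc' (ε / 2) (by positivity)
    simpa [Real.dist_eq] using this
  obtain ⟨δ, hδ0, hδ⟩ := Metric.eventually_nhds_iff.mp hev
  refine ⟨min δ 1, by positivity, ?_⟩
  intro r hrIoi hrdist
  have hr0 : 0 < r := hrIoi
  rw [Real.dist_eq, sub_zero, abs_of_pos hr0] at hrdist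
  have hrδ : r < δ := hrdist.trans_le (min_le_left _ _)
  have hr1 : r < 1 := hrdist.trans_le (min_le_right _ _)
  obtain ⟨z₁, hz₁, hmaxr, hMr⟩ := schwarz_attain hf hr0 hr1
  set S := sSup ((fun z => ‖f z - f 0‖) '' ball (0 : ℂ) r) with hS
  have hupper : S ≤ (L + ε / 2) * r := by
    rw [hMr, norm_sub_dslope]
    have hz₁δ : dist z₁ (0 : ℂ) < δ := by
      rw [dist_zero_right]
      exact (mem_closedBall_zero_iff.1 hz₁).trans_lt hrδ
    have h1 : ‖dslope f 0 z₁‖ ≤ L + ε / 2 := by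
      have := hδ hz₁δ
      rw [abs_lt] at this
      linarith [this.2]
    have h2 : ‖z₁‖ ≤ r := mem_closedBall_zero_iff.1 hz₁
    have := norm_nonneg z₁
    nlinarith [norm_nonneg (dslope f 0 z₁)]
  have hlower : (L - ε / 2) * r ≤ S := by
    have hstep : ∀ t ∈ Set.Ico (0 : ℝ) r, (L - ε / 2) * t ≤ S := by
      intro t ht
      have htball : (t : ℂ) ∈ ball (0 : ℂ) r := by
        rw [mem_ball_zero_iff, Complex.norm_real, Real.norm_of_nonneg ht.1]
        exact ht.2
      have hle : ‖f (t : ℂ) - f 0‖ ≤ S := by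
        rw [hMr]
        exact hmaxr _ (ball_subset_closedBall htball)
      have heq : ‖f (t : ℂ) - f 0‖ = ‖dslope f 0 (t : ℂ)‖ * t := by
        rw [norm_sub_dslope, Complex.norm_real, Real.norm_of_nonneg ht.1]
      have htδ : dist (t : ℂ) (0 : ℂ) < δ := by
        rw [dist_zero_right, Complex.norm_real, Real.norm_of_nonneg ht.1]
        exact ht.2.trans hrδ
      have h1 : L - ε / 2 ≤ ‖dslope f 0 (t : ℂ)‖ := by
        have := hδ htδ
        rw [abs_lt] at this
        linarith [this.1]
      calc (L - ε / 2) * t ≤ ‖dslope f 0 (t : ℂ)‖ * t :=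
            mul_le_mul_of_nonneg_right h1 ht.1
        _ = ‖f (t : ℂ) - f 0‖ := heq.symm
        _ ≤ S := hle
    have hto : Tendsto (fun t : ℝ => (L - ε / 2) * t) (nhdsWithin r (Set.Iio r))
        (nhds ((L - ε / 2) * r)) :=
      ((continuous_const.mul continuous_id).tendsto r).mono_left nhdsWithin_le_nhds
    refine le_of_tendsto hto ?_
    filter_upwards [Ico_mem_nhdsLT hr0] with t ht
    exact hstep t ht
  rw [Real.dist_eq, abs_lt]
  constructor
  · have : (L - ε / 2) ≤ r⁻¹ * S := by
      rw [le_inv_mul_iff₀ hr0]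
      linarith [hlower]
    linarith
  · have : r⁻¹ * S ≤ L + ε / 2 := by
      rw [inv_mul_le_iff₀ hr0]
      linarith [hupper]
    linarith

/-- Schwarz's Lemma, monotonicity form: `φ(r) = r⁻¹ · Rad f(rD)` is strictly
increasing on `(0,1)` unless `f` is linear, in which case it is constant;
moreover `φ(r) → |f'(0)|` as `r → 0⁺`. -/
theorem schwarz_radius_monotone (f : ℂ → ℂ)
    (hf : DifferentiableOn ℂ f (ball (0 : ℂ) 1)) :
    (¬ (∃ a b : ℂ, ∀ z ∈ ball (0 : ℂ) 1, f z = a * z + b) →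
      StrictMonoOn
        (fun r : ℝ => r⁻¹ * sSup ((fun z => ‖f z - f 0‖) '' ball (0 : ℂ) r))
        (Set.Ioo 0 1)) ∧
    ((∃ a b : ℂ, ∀ z ∈ ball (0 : ℂ) 1, f z = a * z + b) →
      ∀ r ∈ Set.Ioo (0 : ℝ) 1, ∀ s ∈ Set.Ioo (0 : ℝ) 1,
        r⁻¹ * sSup ((fun z => ‖f z - f 0‖) '' ball (0 : ℂ) r) =
        s⁻¹ * sSup ((fun z => ‖f z - f 0‖) '' ball (0 : ℂ) s)) ∧
    Tendsto (fun r : ℝ => r⁻¹ * sSup ((fun z => ‖f z - f 0‖) '' ball (0 : ℂ) r))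
      (nhdsWithin 0 (Set.Ioi 0)) (nhds (‖deriv f 0‖)) := by
  refine ⟨?_, ?_, ?_⟩
  · intro hnl r hr s hs hrs
    exact schwarz_strict hf hnl hr hs hrs
  · rintro ⟨a, b, hab⟩ r hr s hs
    rw [schwarz_linear_phi hab hr, schwarz_linear_phi hab hs]
  · exact schwarz_tendsto hf
end

section
/- Let f be analytic on the unit disk D with Diam f(D) := sup_{z,w ∈ D} |f(z) - f(w)| = 2. Then Diam f(rD) ≤ 2r for every 0 < r < 1, and |f'(0)| ≤ 1. Moreover, equality holds in the first inequality for some 0 < r < 1, or in the second, if and only if f(z) = a + cz for some constants a ∈ ℂ and c with |c| = 1. -/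
open Metric Set

namespace LT



lemma schwarz_bound {g : ℂ → ℂ} (hg : DifferentiableOn ℂ g (ball (0:ℂ) 1))
    (h0 : g 0 = 0) (hb : ∀ z ∈ ball (0:ℂ) 1, ‖g z‖ ≤ 1) :
    ∀ z ∈ ball (0:ℂ) 1, ‖dslope g 0 z‖ ≤ 1 := by
  intro z hz
  have key : ∀ ε : ℝ, 0 < ε → ‖dslope g 0 z‖ ≤ 1 + ε := by
    intro ε hε
    have hmaps : MapsTo g (ball (0:ℂ) 1) (ball (g 0) (1+ε)) := by
      intro w hw
      rw [h0, mem_ball, dist_zero_right]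
      exact lt_of_le_of_lt (hb w hw) (by linarith)
    simpa using Complex.norm_dslope_le_div_of_mapsTo_ball hg (hmaps.mono_right ball_subset_closedBall) hz
  by_contra hcon
  push_neg at hcon
  have := key ((‖dslope g 0 z‖ - 1)/2) (by linarith)
  linarith

lemma schwarz_eq {g : ℂ → ℂ} (hg : DifferentiableOn ℂ g (ball (0:ℂ) 1))
    (h0 : g 0 = 0) (hb : ∀ z ∈ ball (0:ℂ) 1, ‖g z‖ ≤ 1)
    {z₀ : ℂ} (hz₀ : z₀ ∈ ball (0:ℂ) 1) (heq : ‖dslope g 0 z₀‖ = 1) :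
    ∃ c : ℂ, ‖c‖ = 1 ∧ ∀ z ∈ ball (0:ℂ) 1, g z = c * z := by
  have gdiff : DifferentiableOn ℂ (dslope g 0) (ball (0:ℂ) 1) :=
    (Complex.differentiableOn_dslope (isOpen_ball.mem_nhds (mem_ball_self one_pos))).mpr hg
  have gmax : IsMaxOn (norm ∘ dslope g 0) (ball (0:ℂ) 1) z₀ :=
    isMaxOn_iff.mpr fun z hz => by
      simpa [heq] using schwarz_bound hg h0 hb z hz
  refine ⟨dslope g 0 z₀, heq, fun z hz => ?_⟩
  have hzz : dslope g 0 z = dslope g 0 z₀ :=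
    Complex.eqOn_of_isPreconnected_of_isMaxOn_norm (convex_ball (0:ℂ) 1).isPreconnected
      isOpen_ball gdiff hz₀ gmax hz
  have h1 := sub_smul_dslope g 0 z
  rw [hzz] at h1
  rw [h0, sub_zero, sub_zero, smul_eq_mul] at h1
  rw [← h1, mul_comm]



lemma mul_mem_ball {a ζ : ℂ} (ha : ‖a‖ ≤ 1) (hζ : ζ ∈ ball (0:ℂ) 1) :
    a * ζ ∈ ball (0:ℂ) 1 := by
  rw [mem_ball_zero_iff] at *
  calc ‖a * ζ‖ = ‖a‖ * ‖ζ‖ := norm_mul a ζ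
  _ ≤ 1 * ‖ζ‖ := by gcongr
  _ < 1 := by simpa using hζ

lemma diff_comp_mul {f : ℂ → ℂ} (hf : DifferentiableOn ℂ f (ball (0:ℂ) 1))
    {a : ℂ} (ha : ‖a‖ ≤ 1) :
    DifferentiableOn ℂ (fun ζ => f (a * ζ)) (ball (0:ℂ) 1) := by
  refine hf.comp ((differentiable_const a).mul differentiable_id).differentiableOn ?_
  exact fun ζ hζ => mul_mem_ball ha hζ

lemma pair_bound {f : ℂ → ℂ} (hf : DifferentiableOn ℂ f (ball (0:ℂ) 1))
    (hd2 : ∀ z ∈ ball (0:ℂ) 1, ∀ w ∈ ball (0:ℂ) 1, dist (f z) (f w) ≤ 2)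
    {a b : ℂ} (ha : ‖a‖ ≤ 1) (hb : ‖b‖ ≤ 1) {ζ : ℂ} (hζ : ζ ∈ ball (0:ℂ) 1) :
    dist (f (a * ζ)) (f (b * ζ)) ≤ 2 * ‖ζ‖ := by
  set h : ℂ → ℂ := fun ζ => (f (a * ζ) - f (b * ζ)) / 2 with hh
  have hdiff : DifferentiableOn ℂ h (ball (0:ℂ) 1) :=
    ((diff_comp_mul hf ha).sub (diff_comp_mul hf hb)).div_const 2
  have h0 : h 0 = 0 := by simp [hh]
  have hbd : ∀ w ∈ ball (0:ℂ) 1, ‖h w‖ ≤ 1 := by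
    intro w hw
    have := hd2 _ (mul_mem_ball ha hw) _ (mul_mem_ball hb hw)
    rw [dist_eq_norm] at this
    rw [hh]
    simp only [norm_div, Complex.norm_ofNat]
    linarith
  have hds := schwarz_bound hdiff h0 hbd ζ hζ
  have key := sub_smul_dslope h 0 ζ
  rw [h0, sub_zero, sub_zero, smul_eq_mul] at key
  have : ‖h ζ‖ ≤ ‖ζ‖ := by
    rw [← key, norm_mul]
    calc ‖ζ‖ * ‖dslope h 0 ζ‖ ≤ ‖ζ‖ * 1 := by gcongr
    _ = ‖ζ‖ := mul_one _
  rw [dist_eq_norm]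
  have h2 : ‖f (a*ζ) - f (b*ζ)‖ = 2 * ‖h ζ‖ := by
    rw [hh]; simp only [norm_div, Complex.norm_ofNat]; ring
  linarith

lemma pointwise_bound {f : ℂ → ℂ} (hf : DifferentiableOn ℂ f (ball (0:ℂ) 1))
    (hd2 : ∀ z ∈ ball (0:ℂ) 1, ∀ w ∈ ball (0:ℂ) 1, dist (f z) (f w) ≤ 2)
    {z w : ℂ} (hz : z ∈ ball (0:ℂ) 1) (hw : w ∈ ball (0:ℂ) 1) :
    dist (f z) (f w) ≤ 2 * max ‖z‖ ‖w‖ := by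
  set m := max ‖z‖ ‖w‖ with hm
  have hm0 : 0 ≤ m := le_trans (norm_nonneg z) (le_max_left _ _)
  have hm1 : m < 1 := by
    rw [mem_ball_zero_iff] at hz hw
    exact max_lt hz hw
  have key : ∀ s : ℝ, m < s → s < 1 → dist (f z) (f w) ≤ 2 * s := by
    intro s hms hs1
    have hs0 : 0 < s := lt_of_le_of_lt hm0 hms
    have hsC : (s:ℂ) ≠ 0 := by exact_mod_cast hs0.ne'
    have ha : ‖z / (s:ℂ)‖ ≤ 1 := by
      rw [norm_div, Complex.norm_real, Real.norm_of_nonneg hs0.le, div_le_one hs0]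
      exact le_of_lt (lt_of_le_of_lt (le_max_left _ _) hms)
    have hb : ‖w / (s:ℂ)‖ ≤ 1 := by
      rw [norm_div, Complex.norm_real, Real.norm_of_nonneg hs0.le, div_le_one hs0]
      exact le_of_lt (lt_of_le_of_lt (le_max_right _ _) hms)
    have hζ : (s:ℂ) ∈ ball (0:ℂ) 1 := by
      rw [mem_ball_zero_iff, Complex.norm_real, Real.norm_of_nonneg hs0.le]; exact hs1
    have := pair_bound hf hd2 ha hb hζ
    rw [div_mul_cancel₀ _ hsC, div_mul_cancel₀ _ hsC] at this
    rwa [Complex.norm_real, Real.norm_of_nonneg hs0.le] at this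
  by_contra hcon
  push_neg at hcon
  set d := dist (f z) (f w)
  have h1 : m < min ((2*m+d)/4) ((m+1)/2) := by
    apply lt_min <;> [linarith; linarith]
  have h2 : min ((2*m+d)/4) ((m+1)/2) < 1 := lt_of_le_of_lt (min_le_right _ _) (by linarith)
  have := key _ h1 h2
  have h3 : 2 * min ((2*m+d)/4) ((m+1)/2) ≤ 2 * ((2*m+d)/4) := by
    have := min_le_left ((2*m+d)/4) ((m+1)/2); linarith
  linarith

lemma odd_part {f : ℂ → ℂ} (hf : DifferentiableOn ℂ f (ball (0:ℂ) 1))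
    (hd2 : ∀ z ∈ ball (0:ℂ) 1, ∀ w ∈ ball (0:ℂ) 1, dist (f z) (f w) ≤ 2)
    (h1 : ‖deriv f 0‖ = 1) :
    ∃ c : ℂ, ‖c‖ = 1 ∧ deriv f 0 = c ∧
      ∀ z ∈ ball (0:ℂ) 1, f z - f (-z) = 2 * (c * z) := by
  set g : ℂ → ℂ := fun z => (f z - f (-z)) / 2 with hg
  have hneg : ∀ z ∈ ball (0:ℂ) 1, -z ∈ ball (0:ℂ) 1 := by
    intro z hz; rwa [mem_ball_zero_iff, norm_neg, ← mem_ball_zero_iff]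
  have hgdiff : DifferentiableOn ℂ g (ball (0:ℂ) 1) := by
    refine (hf.sub (hf.comp differentiable_neg.differentiableOn hneg)).div_const 2
  have hg0 : g 0 = 0 := by simp [hg]
  have hgb : ∀ z ∈ ball (0:ℂ) 1, ‖g z‖ ≤ 1 := by
    intro z hz
    have := hd2 z hz _ (hneg z hz)
    rw [dist_eq_norm] at this
    rw [hg]
    simp only [norm_div, Complex.norm_ofNat]
    linarith
  have hfd : DifferentiableAt ℂ f 0 :=
    hf.differentiableAt (isOpen_ball.mem_nhds (mem_ball_self one_pos))
  have hd1 : HasDerivAt f (deriv f 0) 0 := hfd.hasDerivAt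
  have hd2' : HasDerivAt (fun z => f (-z)) (deriv f 0 * (-1)) 0 := by
    have hinner : HasDerivAt (fun z : ℂ => -z) (-1) 0 := by
      exact (hasDerivAt_id (0:ℂ)).neg
    have houter : HasDerivAt f (deriv f 0) (-0 : ℂ) := by rwa [neg_zero]
    exact HasDerivAt.comp 0 houter hinner
  have hgd : HasDerivAt g (deriv f 0) 0 := by
    have : HasDerivAt (fun z => (f z - f (-z)) / 2) ((deriv f 0 - deriv f 0 * -1) / 2) 0 :=
      (hd1.sub hd2').div_const 2
    convert this using 1
    ring
  have hds : ‖dslope g 0 0‖ = 1 := by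
    rw [dslope_same, hgd.deriv, h1]
  obtain ⟨c, hc, hgc⟩ := schwarz_eq hgdiff hg0 hgb (mem_ball_self one_pos) hds
  have hcg : deriv f 0 = c := by
    have hev : g =ᶠ[nhds (0:ℂ)] fun z => c * z := by
      filter_upwards [isOpen_ball.mem_nhds (mem_ball_self one_pos)] with z hz
      exact hgc z hz
    have : deriv g 0 = deriv (fun z => c * z) 0 := hev.deriv_eq
    rw [hgd.deriv] at this
    rw [this]
    have : HasDerivAt (fun z : ℂ => c * z) c 0 := by
      simpa using (hasDerivAt_id (0:ℂ)).const_mul c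
    exact this.deriv
  refine ⟨c, hc, hcg, fun z hz => ?_⟩
  have := hgc z hz
  rw [hg] at this
  field_simp at this
  rw [this]; ring



lemma im_deriv_zero {f : ℂ → ℂ} (hf : DifferentiableOn ℂ f (ball (0:ℂ) 1))
    (hpb : ∀ z ∈ ball (0:ℂ) 1, ∀ w ∈ ball (0:ℂ) 1, dist (f z) (f w) ≤ 2 * max ‖z‖ ‖w‖)
    {c : ℂ} (hc : ‖c‖ = 1)
    (hrel : ∀ z ∈ ball (0:ℂ) 1, f z - f (-z) = 2 * (c * z))
    {w : ℂ} (hw : w ∈ ball (0:ℂ) 1) (hw0 : w ≠ 0) :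
    (deriv f w / c).im = 0 := by
  have hc0 : c ≠ 0 := by intro h; rw [h] at hc; simp at hc
  set z : ℂ := -w with hzdef
  have hz : z ∈ ball (0:ℂ) 1 := by
    rwa [mem_ball_zero_iff, norm_neg, ← mem_ball_zero_iff]
  have hz0 : z ≠ 0 := neg_ne_zero.mpr hw0
  have hcz : c * z ≠ 0 := mul_ne_zero hc0 hz0
  set Φ : ℂ → ℂ := fun μ => (f z - f (-(μ * z))) / (c * z) with hΦdef
  have hznorm : 0 < ‖z‖ := norm_pos_iff.mpr hz0
  have hbound : ∀ μ : ℂ, ‖μ‖ ≤ 1 → ‖Φ μ‖ ≤ 2 := by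
    intro μ hμ
    have hμz : ‖μ * z‖ ≤ ‖z‖ := by
      rw [norm_mul]; nlinarith [norm_nonneg z]
    have hmem : -(μ * z) ∈ ball (0:ℂ) 1 := by
      rw [mem_ball_zero_iff, norm_neg]
      exact lt_of_le_of_lt hμz (mem_ball_zero_iff.mp hz)
    have hb := hpb z hz _ hmem
    have hmax : max ‖z‖ ‖-(μ * z)‖ = ‖z‖ := max_eq_left (by rwa [norm_neg])
    rw [hmax, dist_eq_norm] at hb
    rw [hΦdef]
    simp only [norm_div, norm_mul, hc, one_mul]
    rw [div_le_iff₀ hznorm]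
    linarith
  have hΦ1 : Φ 1 = 2 := by
    have h := hrel z hz
    simp only [hΦdef, one_mul]
    rw [h]
    field_simp
  -- derivative of Φ at 1
  have hfw : HasDerivAt f (deriv f w) w :=
    (hf.differentiableAt (isOpen_ball.mem_nhds hw)).hasDerivAt
  have hinner : HasDerivAt (fun μ : ℂ => -(μ * z)) (-z) 1 := by
    simpa [Pi.neg_def] using ((hasDerivAt_id (1:ℂ)).mul_const z).neg
  have houter : HasDerivAt f (deriv f w) (-((1:ℂ) * z)) := by
    rwa [show -((1:ℂ) * z) = w by rw [one_mul, hzdef, neg_neg]]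
  have hcomp : HasDerivAt (fun μ => f (-(μ * z))) (deriv f w * -z) 1 :=
    HasDerivAt.comp 1 houter hinner
  have hΦd : HasDerivAt Φ ((0 - deriv f w * -z) / (c * z)) 1 :=
    ((hasDerivAt_const 1 (f z)).sub hcomp).div_const _
  have hΦd' : HasDerivAt Φ (deriv f w / c) 1 := by
    convert hΦd using 1
    field_simp
    ring
  -- curve θ ↦ Φ (exp (θ I))
  set q : ℝ → ℂ := fun θ => Φ (Complex.exp (θ * Complex.I)) with hqdef
  set D : ℂ := deriv f w / c * Complex.I with hDdef
  have hqd : HasDerivAt q D 0 := by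
    have h1 : HasDerivAt (fun μ : ℂ => μ * Complex.I) Complex.I 0 := by
      simpa using (hasDerivAt_id (0:ℂ)).mul_const Complex.I
    have h2 : HasDerivAt Complex.exp (Complex.exp ((0:ℂ) * Complex.I)) ((0:ℂ) * Complex.I) :=
      Complex.hasDerivAt_exp _
    have hexp : HasDerivAt (fun μ : ℂ => Complex.exp (μ * Complex.I)) Complex.I 0 := by
      have := HasDerivAt.comp (0:ℂ) h2 h1
      simpa [Function.comp_def] using this
    have hΦd'' : HasDerivAt Φ (deriv f w / c) (Complex.exp ((0:ℂ) * Complex.I)) := by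
      simpa using hΦd'
    have hC : HasDerivAt (fun μ : ℂ => Φ (Complex.exp (μ * Complex.I))) D 0 := by
      rw [hDdef]; exact HasDerivAt.comp (0:ℂ) hΦd'' hexp
    have := hC.comp_ofReal (z := 0)
    simpa using this
  have hq0 : q 0 = 2 := by
    have : ((0:ℝ):ℂ) * Complex.I = 0 := by simp
    simp only [hqdef, this, Complex.exp_zero]
    exact hΦ1
  -- real function p
  have hre : HasDerivAt (fun θ => (q θ).re) D.re 0 := by
    have := Complex.reCLM.hasFDerivAt.comp_hasDerivAt 0 hqd
    simpa [Function.comp_def] using this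
  have him : HasDerivAt (fun θ => (q θ).im) D.im 0 := by
    have := Complex.imCLM.hasFDerivAt.comp_hasDerivAt 0 hqd
    simpa [Function.comp_def] using this
  set p : ℝ → ℝ := fun θ => (q θ).re * (q θ).re + (q θ).im * (q θ).im with hpdef
  have hp : HasDerivAt p (D.re * (q 0).re + (q 0).re * D.re + (D.im * (q 0).im + (q 0).im * D.im)) 0 :=
    (hre.mul hre).add (him.mul him)
  have hmax : IsLocalMax p 0 := by
    apply Filter.Eventually.of_forall
    intro θ
    have hnorm : ‖Complex.exp ((θ:ℂ) * Complex.I)‖ = 1 := by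
      rw [Complex.norm_exp_ofReal_mul_I]
    have h2 : ‖q θ‖ ≤ 2 := hbound _ (le_of_eq hnorm)
    have hps : p θ = Complex.normSq (q θ) := by rw [hpdef, Complex.normSq_apply]
    have hns : Complex.normSq (q θ) = ‖q θ‖ ^ 2 := by
      rw [Complex.sq_norm]
    have hp0 : p 0 = 4 := by
      simp [hpdef, hq0]
      norm_num
    rw [hp0, hps, hns]
    nlinarith [norm_nonneg (q θ)]
  have hd0 := hmax.deriv_eq_zero
  rw [hp.deriv] at hd0
  rw [hq0] at hd0
  have hre2 : (2:ℂ).re = 2 := by norm_num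
  have him2 : (2:ℂ).im = 0 := by norm_num
  rw [hre2, him2] at hd0
  have hDre : D.re = 0 := by linarith
  rw [hDdef, Complex.mul_I_re] at hDre
  linarith



lemma affine_conclusion {f : ℂ → ℂ} (hf : DifferentiableOn ℂ f (ball (0:ℂ) 1))
    {c : ℂ} (hc : ‖c‖ = 1) (hc0 : c ≠ 0) (hc0d : deriv f 0 = c)
    (him : ∀ w ∈ ball (0:ℂ) 1, (deriv f w / c).im = 0) :
    ∃ a c : ℂ, ‖c‖ = 1 ∧ ∀ z ∈ ball (0:ℂ) 1, f z = a + c * z := by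
  have hA : AnalyticOnNhd ℂ f (ball (0:ℂ) 1) := hf.analyticOnNhd isOpen_ball
  have hG : AnalyticOnNhd ℂ (fun w => deriv f w / c) (ball (0:ℂ) 1) :=
    hA.deriv.div analyticOnNhd_const (fun _ _ => hc0)
  have hG0 : deriv f 0 / c = 1 := by rw [hc0d, div_self hc0]
  rcases hG.is_constant_or_isOpen (convex_ball (0:ℂ) 1).isPreconnected with ⟨v, hv⟩ | hopen
  · have hv0 := hv 0 (mem_ball_self one_pos)
    rw [hG0] at hv0
    have hderiv : ∀ w ∈ ball (0:ℂ) 1, deriv f w = c := by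
      intro w hw
      have h2 := hv w hw
      rw [← hv0] at h2
      field_simp at h2
      exact h2
    refine ⟨f 0, c, hc, fun z hz => ?_⟩
    set F : ℂ → ℂ := fun z => f z - c * z with hF
    have hFdiff : DifferentiableOn ℂ F (ball (0:ℂ) 1) :=
      hf.sub (((differentiable_const c).mul differentiable_id).differentiableOn)
    have hfderiv : ∀ x ∈ ball (0:ℂ) 1, fderivWithin ℂ F (ball (0:ℂ) 1) x = 0 := by
      intro x hx
      have h1 : HasDerivAt f (deriv f x) x :=
        (hf.differentiableAt (isOpen_ball.mem_nhds hx)).hasDerivAt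
      have h2 : HasDerivAt (fun z => c * z) c x := by
        simpa using (hasDerivAt_id x).const_mul c
      have hdx : HasDerivAt F 0 x := by
        have := h1.sub h2
        rwa [hderiv x hx, sub_self] at this
      have hfx : HasFDerivAt F (0 : ℂ →L[ℂ] ℂ) x := by
        have h3 := hdx.hasFDerivAt
        have h4 : (ContinuousLinearMap.toSpanSingleton ℂ (0:ℂ)) = 0 := by
          ext; simp
        rwa [h4] at h3
      rw [fderivWithin_of_isOpen isOpen_ball hx]
      exact hfx.fderiv
    have hconst := (convex_ball (0:ℂ) 1).is_const_of_fderivWithin_eq_zero hFdiff hfderiv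
      hz (mem_ball_self one_pos)
    simp only [hF, mul_zero, sub_zero] at hconst
    linear_combination hconst
  · exfalso
    have hopen' := hopen _ (subset_refl _) isOpen_ball
    have h1mem : (1:ℂ) ∈ (fun w => deriv f w / c) '' ball (0:ℂ) 1 :=
      ⟨0, mem_ball_self one_pos, hG0⟩
    rcases Metric.isOpen_iff.mp hopen' 1 h1mem with ⟨ε, hε, hball⟩
    have hmem : (1 + (ε/2) * Complex.I) ∈ ball (1:ℂ) ε := by
      rw [mem_ball, dist_eq_norm]
      have : (1 + (ε/2) * Complex.I) - 1 = (ε/2 : ℝ) * Complex.I := by push_cast; ring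
      rw [this, norm_mul, Complex.norm_real, Complex.norm_I, mul_one,
        Real.norm_of_nonneg (by linarith)]
      linarith
    rcases hball hmem with ⟨x, hx, hxe⟩
    have hxim := him x hx
    simp only at hxe
    rw [hxe] at hxim
    simp [Complex.add_im, Complex.one_im, Complex.mul_im] at hxim
    linarith


lemma deriv_le_one {f : ℂ → ℂ} (hf : DifferentiableOn ℂ f (ball (0:ℂ) 1))
    (hd2 : ∀ z ∈ ball (0:ℂ) 1, ∀ w ∈ ball (0:ℂ) 1, dist (f z) (f w) ≤ 2) :
    ‖deriv f 0‖ ≤ 1 := by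
  set g : ℂ → ℂ := fun z => (f z - f (-z)) / 2 with hg
  have hneg : ∀ z ∈ ball (0:ℂ) 1, -z ∈ ball (0:ℂ) 1 := by
    intro z hz; rwa [mem_ball_zero_iff, norm_neg, ← mem_ball_zero_iff]
  have hgdiff : DifferentiableOn ℂ g (ball (0:ℂ) 1) :=
    (hf.sub (hf.comp differentiable_neg.differentiableOn hneg)).div_const 2
  have hg0 : g 0 = 0 := by simp [hg]
  have hgb : ∀ z ∈ ball (0:ℂ) 1, ‖g z‖ ≤ 1 := by
    intro z hz
    have := hd2 z hz _ (hneg z hz)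
    rw [dist_eq_norm] at this
    rw [hg]
    simp only [norm_div, Complex.norm_ofNat]
    linarith
  have hfd : DifferentiableAt ℂ f 0 :=
    hf.differentiableAt (isOpen_ball.mem_nhds (mem_ball_self one_pos))
  have hd1 : HasDerivAt f (deriv f 0) 0 := hfd.hasDerivAt
  have hd2' : HasDerivAt (fun z => f (-z)) (deriv f 0 * (-1)) 0 := by
    have hinner : HasDerivAt (fun z : ℂ => -z) (-1) 0 := by
      exact (hasDerivAt_id (0:ℂ)).neg
    have houter : HasDerivAt f (deriv f 0) (-0 : ℂ) := by rwa [neg_zero]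
    exact HasDerivAt.comp 0 houter hinner
  have hgd : HasDerivAt g (deriv f 0) 0 := by
    have : HasDerivAt (fun z => (f z - f (-z)) / 2) ((deriv f 0 - deriv f 0 * -1) / 2) 0 :=
      (hd1.sub hd2').div_const 2
    convert this using 1
    ring
  have := schwarz_bound hgdiff hg0 hgb 0 (mem_ball_self one_pos)
  rwa [dslope_same, hgd.deriv] at this

lemma linear_of_deriv_norm_one {f : ℂ → ℂ} (hf : DifferentiableOn ℂ f (ball (0:ℂ) 1))
    (hd2 : ∀ z ∈ ball (0:ℂ) 1, ∀ w ∈ ball (0:ℂ) 1, dist (f z) (f w) ≤ 2)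
    (h1 : ‖deriv f 0‖ = 1) :
    ∃ a c : ℂ, ‖c‖ = 1 ∧ ∀ z ∈ ball (0:ℂ) 1, f z = a + c * z := by
  obtain ⟨c, hc, hc0d, hrel⟩ := odd_part hf hd2 h1
  have hc0 : c ≠ 0 := by intro h; rw [h] at hc; simp at hc
  have hpb : ∀ z ∈ ball (0:ℂ) 1, ∀ w ∈ ball (0:ℂ) 1, dist (f z) (f w) ≤ 2 * max ‖z‖ ‖w‖ :=
    fun z hz w hw => pointwise_bound hf hd2 hz hw
  have him : ∀ w ∈ ball (0:ℂ) 1, (deriv f w / c).im = 0 := by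
    intro w hw
    rcases eq_or_ne w 0 with rfl | hw0
    · rw [hc0d, div_self hc0]; norm_num
    · exact im_deriv_zero hf hpb hc hrel hw hw0
  exact affine_conclusion hf hc hc0 hc0d him

set_option maxHeartbeats 2000000 in
lemma case_a {f : ℂ → ℂ} (hf : DifferentiableOn ℂ f (ball (0:ℂ) 1))
    (hd2 : ∀ z ∈ ball (0:ℂ) 1, ∀ w ∈ ball (0:ℂ) 1, dist (f z) (f w) ≤ 2)
    {r : ℝ} (hr0 : 0 < r) (hr1 : r < 1)
    (heq : EMetric.diam (f '' ball (0:ℂ) r) = ENNReal.ofReal (2*r)) :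
    ‖deriv f 0‖ = 1 := by
  have hrC : ((r:ℂ)) ≠ 0 := by exact_mod_cast hr0.ne'
  have hsub : closedBall (0:ℂ) r ⊆ ball (0:ℂ) 1 := by
    intro z hz
    rw [mem_closedBall_zero_iff] at hz
    rw [mem_ball_zero_iff]
    linarith
  have hpb : ∀ z ∈ closedBall (0:ℂ) r, ∀ w ∈ closedBall (0:ℂ) r,
      dist (f z) (f w) ≤ 2*r := by
    intro z hz w hw
    have h := pointwise_bound hf hd2 (hsub hz) (hsub hw)
    rw [mem_closedBall_zero_iff] at hz hw
    have : max ‖z‖ ‖w‖ ≤ r := max_le hz hw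
    linarith
  have hK : IsCompact (f '' closedBall (0:ℂ) r) :=
    (isCompact_closedBall _ _).image_of_continuousOn (hf.continuousOn.mono hsub)
  have h0mem : f 0 ∈ f '' closedBall (0:ℂ) r :=
    mem_image_of_mem f (mem_closedBall_self hr0.le)
  obtain ⟨⟨x, y⟩, hxy, hmax⟩ :=
    (hK.prod hK).exists_isMaxOn ⟨(f 0, f 0), mem_prod.mpr ⟨h0mem, h0mem⟩⟩
      ((continuous_dist.comp (continuous_fst.prodMk continuous_snd)).continuousOn)
  have hge : ENNReal.ofReal (2*r) ≤ ENNReal.ofReal (dist x y) := by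
    rw [← heq]
    apply EMetric.diam_le
    rintro p ⟨z1, hz1, rfl⟩ q ⟨z2, hz2, rfl⟩
    rw [edist_dist]
    apply ENNReal.ofReal_le_ofReal
    have hm : (f z1, f z2) ∈ (f '' closedBall (0:ℂ) r) ×ˢ (f '' closedBall (0:ℂ) r) :=
      mem_prod.mpr ⟨mem_image_of_mem f (ball_subset_closedBall hz1),
        mem_image_of_mem f (ball_subset_closedBall hz2)⟩
    exact hmax hm
  have h2r : 2*r ≤ dist x y := (ENNReal.ofReal_le_ofReal_iff dist_nonneg).mp hge
  rw [mem_prod] at hxy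
  obtain ⟨z1, hz1, rfl⟩ := hxy.1
  obtain ⟨z2, hz2, rfl⟩ := hxy.2
  have hdeq : dist (f z1) (f z2) = 2*r := le_antisymm (hpb z1 hz1 z2 hz2) h2r
  -- build the pair function
  set a : ℂ := z1 / (r:ℂ) with hadef
  set b : ℂ := z2 / (r:ℂ) with hbdef
  have ha : ‖a‖ ≤ 1 := by
    rw [hadef, norm_div, Complex.norm_real, Real.norm_of_nonneg hr0.le, div_le_one hr0]
    exact mem_closedBall_zero_iff.mp hz1
  have hb : ‖b‖ ≤ 1 := by
    rw [hbdef, norm_div, Complex.norm_real, Real.norm_of_nonneg hr0.le, div_le_one hr0]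
    exact mem_closedBall_zero_iff.mp hz2
  set h : ℂ → ℂ := fun ζ => (f (a * ζ) - f (b * ζ)) / 2 with hhdef
  have hdiff : DifferentiableOn ℂ h (ball (0:ℂ) 1) :=
    ((diff_comp_mul hf ha).sub (diff_comp_mul hf hb)).div_const 2
  have h0 : h 0 = 0 := by simp [hhdef]
  have hbd : ∀ w ∈ ball (0:ℂ) 1, ‖h w‖ ≤ 1 := by
    intro w hw
    have := hd2 _ (mul_mem_ball ha hw) _ (mul_mem_ball hb hw)
    rw [dist_eq_norm] at this
    rw [hhdef]
    simp only [norm_div, Complex.norm_ofNat]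
    linarith
  have hrb : ((r:ℂ)) ∈ ball (0:ℂ) 1 := by
    rw [mem_ball_zero_iff, Complex.norm_real, Real.norm_of_nonneg hr0.le]; exact hr1
  have har : a * (r:ℂ) = z1 := by rw [hadef, div_mul_cancel₀ _ hrC]
  have hbr : b * (r:ℂ) = z2 := by rw [hbdef, div_mul_cancel₀ _ hrC]
  have hnormhr : ‖h (r:ℂ)‖ = r := by
    rw [hhdef]
    simp only [har, hbr, norm_div, Complex.norm_ofNat]
    rw [← dist_eq_norm, hdeq]
    ring
  have hds : ‖dslope h 0 (r:ℂ)‖ = 1 := by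
    rw [dslope_of_ne _ hrC, slope_def_field, h0, sub_zero, sub_zero, norm_div, hnormhr,
      Complex.norm_real, Real.norm_of_nonneg hr0.le, div_self hr0.ne']
  obtain ⟨c', hc', hhc⟩ := schwarz_eq hdiff h0 hbd hrb hds
  -- derivative of h at 0
  have hfd : DifferentiableAt ℂ f 0 :=
    hf.differentiableAt (isOpen_ball.mem_nhds (mem_ball_self one_pos))
  have hda : HasDerivAt (fun ζ => f (a * ζ)) (deriv f 0 * a) 0 := by
    have hinner : HasDerivAt (fun ζ : ℂ => a * ζ) a 0 := by
      simpa using (hasDerivAt_id (0:ℂ)).const_mul a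
    have houter : HasDerivAt f (deriv f 0) (a * 0) := by
      rw [mul_zero]; exact hfd.hasDerivAt
    exact HasDerivAt.comp 0 houter hinner
  have hdb : HasDerivAt (fun ζ => f (b * ζ)) (deriv f 0 * b) 0 := by
    have hinner : HasDerivAt (fun ζ : ℂ => b * ζ) b 0 := by
      simpa using (hasDerivAt_id (0:ℂ)).const_mul b
    have houter : HasDerivAt f (deriv f 0) (b * 0) := by
      rw [mul_zero]; exact hfd.hasDerivAt
    exact HasDerivAt.comp 0 houter hinner
  have hdh : HasDerivAt h ((deriv f 0 * a - deriv f 0 * b) / 2) 0 := (hda.sub hdb).div_const 2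
  have hdc : (deriv f 0 * a - deriv f 0 * b) / 2 = c' := by
    have hev : h =ᶠ[nhds (0:ℂ)] fun z => c' * z := by
      filter_upwards [isOpen_ball.mem_nhds (mem_ball_self one_pos)] with z hz
      exact hhc z hz
    have h1 : deriv h 0 = deriv (fun z => c' * z) 0 := hev.deriv_eq
    rw [hdh.deriv] at h1
    rw [h1]
    have : HasDerivAt (fun z : ℂ => c' * z) c' 0 := by
      simpa using (hasDerivAt_id (0:ℂ)).const_mul c'
    exact this.deriv
  -- norms
  have hab : ‖a - b‖ ≤ 2 := le_trans (norm_sub_le a b) (by linarith)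
  have hnormeq : ‖deriv f 0‖ * ‖a - b‖ = 2 := by
    have := congrArg norm hdc
    rw [hc'] at this
    rw [norm_div, Complex.norm_ofNat, ← mul_sub, norm_mul] at this
    field_simp at this
    linarith
  have hle := deriv_le_one hf hd2
  nlinarith [norm_nonneg (deriv f 0), norm_nonneg (a - b)]

end LT

open LT in
/-- The Landau–Toeplitz theorem: if `f` is analytic on the unit disk with
`Diam f(𝔻) = 2`, then `Diam f(r𝔻) ≤ 2r` for `0 < r < 1` and `|f'(0)| ≤ 1`,
with equality (in the first for some `r`, or in the second) iff
`f(z) = a + cz` with `|c| = 1`. -/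
theorem landau_toeplitz (f : ℂ → ℂ)
    (hf : DifferentiableOn ℂ f (ball (0 : ℂ) 1))
    (hdiam : EMetric.diam (f '' ball (0 : ℂ) 1) = ENNReal.ofReal 2) :
    (∀ r : ℝ, r ∈ Set.Ioo (0 : ℝ) 1 →
      EMetric.diam (f '' ball (0 : ℂ) r) ≤ ENNReal.ofReal (2 * r)) ∧
    ‖deriv f 0‖ ≤ 1 ∧
    (((∃ r ∈ Set.Ioo (0 : ℝ) 1,
        EMetric.diam (f '' ball (0 : ℂ) r) = ENNReal.ofReal (2 * r)) ∨
      ‖deriv f 0‖ = 1) ↔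
      ∃ a c : ℂ, ‖c‖ = 1 ∧ ∀ z ∈ ball (0 : ℂ) 1, f z = a + c * z) := by
  have hd2 : ∀ z ∈ ball (0:ℂ) 1, ∀ w ∈ ball (0:ℂ) 1, dist (f z) (f w) ≤ 2 := by
    intro z hz w hw
    have h1 : edist (f z) (f w) ≤ ENNReal.ofReal 2 := by
      rw [← hdiam]
      exact EMetric.edist_le_diam_of_mem (mem_image_of_mem f hz) (mem_image_of_mem f hw)
    rw [edist_dist] at h1
    exact (ENNReal.ofReal_le_ofReal_iff (by norm_num)).mp h1
  have part1 : ∀ r : ℝ, r ∈ Set.Ioo (0:ℝ) 1 →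
      EMetric.diam (f '' ball (0:ℂ) r) ≤ ENNReal.ofReal (2*r) := by
    intro r hr
    apply EMetric.diam_le
    rintro p ⟨z, hz, rfl⟩ q ⟨w, hw, rfl⟩
    rw [edist_dist]
    apply ENNReal.ofReal_le_ofReal
    have hz1 : z ∈ ball (0:ℂ) 1 := ball_subset_ball hr.2.le hz
    have hw1 : w ∈ ball (0:ℂ) 1 := ball_subset_ball hr.2.le hw
    have h := pointwise_bound hf hd2 hz1 hw1
    have hmz : ‖z‖ < r := mem_ball_zero_iff.mp hz
    have hmw : ‖w‖ < r := mem_ball_zero_iff.mp hw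
    have hle : max ‖z‖ ‖w‖ ≤ r := max_le hmz.le hmw.le
    linarith
  have part2 : ‖deriv f 0‖ ≤ 1 := deriv_le_one hf hd2
  have lin : ‖deriv f 0‖ = 1 →
      ∃ a c : ℂ, ‖c‖ = 1 ∧ ∀ z ∈ ball (0 : ℂ) 1, f z = a + c * z := by
    intro h1
    obtain ⟨a, c, hc, hfe⟩ := linear_of_deriv_norm_one hf hd2 h1
    exact ⟨a, c, by exact hc, hfe⟩
  refine ⟨part1, by exact part2, ?_, ?_⟩
  · rintro (⟨r, hr, heq⟩ | heq)
    · exact lin (case_a hf hd2 hr.1 hr.2 heq)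
    · exact lin (by exact heq)
  · rintro ⟨a, c, hc, hfe⟩
    right
    have hev : f =ᶠ[nhds (0:ℂ)] fun z => a + c * z := by
      filter_upwards [isOpen_ball.mem_nhds (mem_ball_self one_pos)] with z hz
      exact hfe z hz
    have hder : HasDerivAt (fun z : ℂ => a + c * z) c 0 := by
      simpa using ((hasDerivAt_id (0:ℂ)).const_mul c).const_add a
    rw [hev.deriv_eq, hder.deriv]
    exact hc
end

section
/- Let g be analytic on the unit disk D, let 0 < r < 1 and |w| = r, and suppose g(w) = w and max_{|z|=r} |g(z)| = r. Then Im g'(w) = 0. -/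
open Metric Set

/-- If `g` is analytic on the unit disk, `0 < r < 1`, `|w| = r`, `g(w) = w`,
and `|g|` attains the value `r` as its maximum on the circle `|z| = r`, then
`Im g'(w) = 0`. -/
theorem fixed_point_deriv_real (g : ℂ → ℂ)
    (hg : DifferentiableOn ℂ g (ball (0 : ℂ) 1))
    (r : ℝ) (hr : r ∈ Set.Ioo (0 : ℝ) 1) (w : ℂ) (hw : ‖w‖ = r)
    (hfix : g w = w)
    (hmax : ∀ z : ℂ, ‖z‖ = r → ‖g z‖ ≤ r) :
    (deriv g w).im = 0 := by
  obtain ⟨hr0, hr1⟩ := hr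
  have hwball : w ∈ ball (0 : ℂ) 1 := by
    simp [mem_ball_zero_iff, hw, hr1]
  have hgw : DifferentiableAt ℂ g w := hg.differentiableAt (isOpen_ball.mem_nhds hwball)
  set d := deriv g w with hd
  -- the curve θ ↦ w * exp (θ i)
  set c : ℝ → ℂ := fun θ => w * Complex.exp (θ * Complex.I) with hc
  have hcabs : ∀ θ : ℝ, ‖c θ‖ = r := by
    intro θ
    simp [hc, norm_mul, Complex.norm_exp, hw]
  have hc0 : c 0 = w := by simp [hc]
  have hcd : HasDerivAt c (w * Complex.I) 0 := by
    have h1 : HasDerivAt (fun θ : ℝ => (θ : ℂ)) 1 0 := by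
      exact Complex.ofRealCLM.hasDerivAt (x := (0 : ℝ))
    have h2 : HasDerivAt (fun θ : ℝ => (θ : ℂ) * Complex.I) Complex.I 0 := by
      simpa using h1.mul_const Complex.I
    have h3 := h2.cexp
    simpa [hc] using h3.const_mul w
  -- G = g ∘ c
  set G : ℝ → ℂ := fun θ => g (c θ) with hGdef
  have hG : HasDerivAt G (w * Complex.I * d) 0 := by
    have hcd' : HasDerivAt c (w * Complex.I) 0 := hcd
    rw [← hc0] at hgw
    have := (hgw.hasFDerivAt.restrictScalars ℝ).comp_hasDerivAt 0 hcd'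
    rw [hc0] at hgw
    simp only [hGdef]
    simp [hc0, hd, mul_comm, smul_eq_mul] at this ⊢
    exact this
  have hG0 : G 0 = w := by simp [hGdef, hc0, hfix]
  -- f = |G|²
  set f : ℝ → ℝ := fun θ => (G θ).re * (G θ).re + (G θ).im * (G θ).im with hfdef
  have hre : HasDerivAt (fun θ => (G θ).re) (w * Complex.I * d).re 0 :=
    Complex.reCLM.hasFDerivAt.comp_hasDerivAt 0 hG
  have him : HasDerivAt (fun θ => (G θ).im) (w * Complex.I * d).im 0 :=
    Complex.imCLM.hasFDerivAt.comp_hasDerivAt 0 hG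
  have hf : HasDerivAt f
      ((w * Complex.I * d).re * (G 0).re + (G 0).re * (w * Complex.I * d).re
        + ((w * Complex.I * d).im * (G 0).im + (G 0).im * (w * Complex.I * d).im)) 0 :=
    (hre.mul hre).add (him.mul him)
  -- f has a global max at 0
  have hlocmax : IsLocalMax f 0 := by
    have : ∀ θ, f θ ≤ f 0 := by
      intro θ
      have h1 := hmax (c θ) (hcabs θ)
      have h2 : Complex.normSq (G θ) ≤ r ^ 2 := by
        have := Complex.sq_norm (G θ)
        nlinarith [norm_nonneg (G θ)]
      have h3 : f 0 = r ^ 2 := by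
        have h4 := Complex.sq_norm w
        rw [hw] at h4
        simp only [hfdef, hG0]
        rw [h4, Complex.normSq_apply]
      have hfθ : f θ = Complex.normSq (G θ) := by
        simp only [hfdef, Complex.normSq_apply]
      rw [hfθ, h3]
      exact h2
    exact IsMaxOn.isLocalMax (fun θ _ => this θ) Filter.univ_mem
  have hderiv0 : deriv f 0 = 0 := hlocmax.deriv_eq_zero
  have hD := hf.deriv
  rw [hderiv0] at hD
  have hnorm : w.re * w.re + w.im * w.im = r ^ 2 := by
    have h4 := Complex.sq_norm w
    rw [hw] at h4
    rw [h4, Complex.normSq_apply]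
  rw [hG0] at hD
  simp only [Complex.mul_re, Complex.mul_im, Complex.I_re, Complex.I_im] at hD
  have hr2 : r ^ 2 ≠ 0 := by positivity
  have key : d.im * (w.re * w.re + w.im * w.im) = 0 := by linear_combination ((1:ℝ)/2) * hD
  rw [hnorm] at key
  rcases mul_eq_zero.mp key with h | h
  · exact h
  · exact absurd h hr2
end

section
/- The n-diameter of the closed unit disk equals n^{1/(n-1)}, and it is attained exactly at the n-th roots of unity, up to rotation. -/
open Metric Set

section Aux

open Finset Matrix

private lemma prod_pairs_eq_abs_det {n : ℕ} (ζ : Fin n → ℂ) :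
    (∏ p ∈ Finset.univ.filter (fun p : Fin n × Fin n => p.1 < p.2),
        ‖ζ p.1 - ζ p.2‖) = ‖(Matrix.vandermonde ζ).det‖ := by
  rw [Matrix.det_vandermonde, norm_prod]
  simp_rw [norm_prod]
  rw [Finset.prod_sigma']
  refine Finset.prod_nbij' (fun p : Fin n × Fin n => (⟨p.1, p.2⟩ : Σ _ : Fin n, Fin n))
    (fun x => (x.1, x.2)) ?_ ?_ ?_ ?_ ?_
  · rintro ⟨i, j⟩ h
    simp only [Finset.mem_filter, Finset.mem_univ, true_and] at h
    simpa [Finset.mem_sigma, Finset.mem_Ioi] using h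
  · rintro ⟨i, j⟩ h
    simp only [Finset.mem_sigma, Finset.mem_Ioi] at h
    simp only [Finset.mem_filter, Finset.mem_univ, true_and]
    exact h.2
  · rintro ⟨i, j⟩ _; rfl
  · rintro ⟨i, j⟩ _; rfl
  · rintro ⟨i, j⟩ h
    exact (norm_sub_rev _ _).symm

private lemma det_gram_eq {n : ℕ} (ζ : Fin n → ℂ) :
    (Matrix.vandermonde ζ * (Matrix.vandermonde ζ)ᴴ).det
      = ((‖(Matrix.vandermonde ζ).det‖ ^ 2 : ℝ) : ℂ) := by
  have : star (Matrix.vandermonde ζ).det = (starRingEnd ℂ) ((Matrix.vandermonde ζ).det) := rfl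
  rw [Matrix.det_mul, Matrix.det_conjTranspose, this, Complex.mul_conj]
  norm_cast
  rw [Complex.sq_norm]

private lemma gram_apply {n : ℕ} (ζ : Fin n → ℂ) (j l : Fin n) :
    (Matrix.vandermonde ζ * (Matrix.vandermonde ζ)ᴴ) j l
      = ∑ k : Fin n, (ζ j * (starRingEnd ℂ) (ζ l)) ^ (k : ℕ) := by
  simp [Matrix.mul_apply, Matrix.conjTranspose_apply, Matrix.vandermonde_apply, mul_pow,
    map_pow]

private lemma amgm_fin {n : ℕ} (hn : 0 < n) (l : Fin n → ℝ) (h0 : ∀ i, 0 ≤ l i) :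
    ∏ i, l i ≤ ((∑ i, l i) / n) ^ n := by
  have hw : ∑ _i : Fin n, (1 / n : ℝ) = 1 := by
    simp [Finset.sum_const]
    field_simp
  have key := Real.geom_mean_le_arith_mean_weighted Finset.univ (fun _ => (1 / n : ℝ)) l
    (fun i _ => by positivity) hw (fun i _ => h0 i)
  have hprod : ∏ i, l i ^ (1 / n : ℝ) = (∏ i, l i) ^ (1 / n : ℝ) := by
    rw [← Real.finset_prod_rpow _ _ (fun i _ => h0 i)]
  have hsum : ∑ i : Fin n, (1 / n : ℝ) * l i = (∑ i, l i) / n := by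
    rw [Finset.sum_div]
    exact Finset.sum_congr rfl fun i _ => by ring
  rw [hprod, hsum] at key
  have h1 : 0 ≤ ∏ i, l i := Finset.prod_nonneg fun i _ => h0 i
  have h2 : ((∏ i, l i) ^ (1 / n : ℝ)) ^ (n : ℝ) ≤ ((∑ i, l i) / n) ^ (n : ℝ) := by
    apply Real.rpow_le_rpow (Real.rpow_nonneg h1 _) key (by positivity)
  rw [← Real.rpow_natCast ((∑ i, l i) / n) n]
  rwa [← Real.rpow_mul h1, one_div, inv_mul_cancel₀ (by positivity : (n:ℝ) ≠ 0),
    Real.rpow_one] at h2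

private lemma eig_all_eq {n : ℕ} (hn : 2 ≤ n) (l : Fin n → ℝ) (h0 : ∀ i, 0 ≤ l i)
    (hsum : ∑ i, l i ≤ (n : ℝ) * n) (hprod : ∏ i, l i = (n : ℝ) ^ n) :
    ∀ i, l i = n := by
  have hn0 : (0:ℝ) < n := by positivity
  have hnpos : 0 < n := by omega
  have hnn : (0:ℝ) < (n:ℝ)^n := by positivity
  have hpos : ∀ i, 0 < l i := by
    intro i
    rcases (h0 i).lt_or_eq with h | h
    · exact h
    · exfalso
      rw [← hprod, Finset.prod_eq_zero (Finset.mem_univ i) h.symm] at hnn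
      exact lt_irrefl _ hnn
  have hsumnn : 0 ≤ ∑ i, l i := Finset.sum_nonneg fun i _ => h0 i
  have hall : ∀ a b : Fin n, l a = l b := by
    intro a b
    by_contra hne
    have hab : a ≠ b := fun h => hne (by rw [h])
    set m := (l a + l b) / 2 with hm
    have hm0 : 0 ≤ m := by
      have := (hpos a).le; have := (hpos b).le
      rw [hm]; linarith
    set μ := Function.update (Function.update l a m) b m with hμ
    have hbmem : b ∈ (Finset.univ : Finset (Fin n)) := Finset.mem_univ b
    have hamem : a ∈ Finset.univ \ {b} := by simp [Finset.mem_sdiff, hab]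
    have hub : Function.update l a m b = l b := Function.update_of_ne (Ne.symm hab) _ _
    have hμsum : ∑ i, μ i = ∑ i, l i := by
      rw [hμ, Finset.sum_update_of_mem hbmem, Finset.sum_update_of_mem hamem,
        Finset.sum_eq_add_sum_sdiff_singleton_of_mem hbmem l,
        Finset.sum_eq_add_sum_sdiff_singleton_of_mem hamem l]
      rw [hm]; ring
    have hR : 0 < ∏ i ∈ (Finset.univ \ {b}) \ {a}, l i :=
      Finset.prod_pos fun i _ => hpos i
    have hμprod : ∏ i, μ i = m * (m * ∏ i ∈ (Finset.univ \ {b}) \ {a}, l i) := by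
      rw [hμ, Finset.prod_update_of_mem hbmem, Finset.prod_update_of_mem hamem]
    have hlprod : ∏ i, l i = l b * (l a * ∏ i ∈ (Finset.univ \ {b}) \ {a}, l i) := by
      rw [Finset.prod_eq_mul_prod_sdiff_singleton_of_mem hbmem l,
        Finset.prod_eq_mul_prod_sdiff_singleton_of_mem hamem l]
    have hlt : l a * l b < m * m := by
      have h2 : (0:ℝ) < (l a - l b)^2 := by
        have : l a - l b ≠ 0 := sub_ne_zero.mpr hne
        positivity
      rw [hm]; nlinarith
    have hμ0 : ∀ i, 0 ≤ μ i := by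
      intro i
      rw [hμ]
      rcases eq_or_ne i b with rfl | hib
      · simp [hm0]
      · rw [Function.update_of_ne hib]
        rcases eq_or_ne i a with rfl | hia
        · simp [hm0]
        · rw [Function.update_of_ne hia]; exact (h0 i)
    have key : ∏ i, μ i ≤ ((∑ i, μ i) / n) ^ n := amgm_fin hnpos μ hμ0
    have hdivle : (∑ i, μ i) / n ≤ (n:ℝ) := by
      rw [hμsum, div_le_iff₀ hn0]
      linarith
    have h2 : ((∑ i, μ i) / n) ^ n ≤ (n:ℝ)^n := by
      exact pow_le_pow_left₀ (div_nonneg (by rw [hμsum]; exact hsumnn) hn0.le) hdivle _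
    have hstrict : ∏ i, l i < ∏ i, μ i := by
      rw [hμprod, hlprod]
      have := mul_lt_mul_of_pos_right hlt hR
      calc l b * (l a * ∏ i ∈ (Finset.univ \ {b}) \ {a}, l i)
          = (l a * l b) * ∏ i ∈ (Finset.univ \ {b}) \ {a}, l i := by ring
        _ < (m * m) * ∏ i ∈ (Finset.univ \ {b}) \ {a}, l i := this
        _ = m * (m * ∏ i ∈ (Finset.univ \ {b}) \ {a}, l i) := by ring
    rw [hprod] at hstrict
    linarith
  intro i
  have hconst : ∏ j, l j = (l i) ^ n := by
    rw [Finset.prod_congr rfl (fun j _ => hall j i)]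
    simp [Finset.prod_const, Finset.card_univ]
  rw [hconst] at hprod
  exact (pow_left_strictMonoOn₀ (M₀ := ℝ) (n := n) (by omega)).injOn
    (Set.mem_setOf.mpr (h0 i)) (Set.mem_setOf.mpr hn0.le) hprod

private lemma trace_eq_sum_eigs {n : ℕ} {A : Matrix (Fin n) (Fin n) ℂ} (hA : A.IsHermitian) :
    A.trace = ∑ i, (hA.eigenvalues i : ℂ) := by
  conv_lhs => rw [hA.spectral_theorem, Unitary.conjStarAlgAut_apply]
  rw [Matrix.trace_mul_cycle]
  rw [show (star (hA.eigenvectorUnitary : Matrix (Fin n) (Fin n) ℂ)) *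
      (hA.eigenvectorUnitary : Matrix (Fin n) (Fin n) ℂ) = 1 from
    Matrix.mem_unitaryGroup_iff'.mp (hA.eigenvectorUnitary).2]
  rw [Matrix.one_mul, Matrix.trace_diagonal]
  rfl

private lemma eq_smul_one_of_eigs_const {n : ℕ} {A : Matrix (Fin n) (Fin n) ℂ} (hA : A.IsHermitian)
    (c : ℝ) (h : ∀ i, hA.eigenvalues i = c) : A = (c : ℂ) • 1 := by
  have hd : Matrix.diagonal (RCLike.ofReal ∘ hA.eigenvalues)
      = ((c : ℂ) • 1 : Matrix (Fin n) (Fin n) ℂ) := by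
    ext i j
    rcases eq_or_ne i j with rfl | hij
    · simp [Matrix.diagonal_apply_eq, h i, Matrix.one_apply_eq]
    · simp [Matrix.diagonal_apply_ne _ hij, Matrix.one_apply_ne hij]
  rw [hA.spectral_theorem, Unitary.conjStarAlgAut_apply, hd, Matrix.mul_smul, Matrix.smul_mul, Matrix.mul_one,
    Matrix.mem_unitaryGroup_iff.mp (hA.eigenvectorUnitary).2]

private lemma prod_eigs_eq {n : ℕ} (ζ : Fin n → ℂ) :
    ‖(Matrix.vandermonde ζ).det‖ ^ 2
      = ∏ i, (Matrix.isHermitian_mul_conjTranspose_self (Matrix.vandermonde ζ)).eigenvalues i := by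
  have h1 := det_gram_eq ζ
  rw [(Matrix.isHermitian_mul_conjTranspose_self
    (Matrix.vandermonde ζ)).det_eq_prod_eigenvalues] at h1
  norm_cast at h1
  exact (Complex.ofReal_inj.mp h1).symm

private lemma sum_eigs_eq {n : ℕ} (ζ : Fin n → ℂ) :
    ∑ i, (Matrix.isHermitian_mul_conjTranspose_self (Matrix.vandermonde ζ)).eigenvalues i
      = ∑ j, ∑ k : Fin n, Complex.normSq (ζ j) ^ (k : ℕ) := by
  have h1 := trace_eq_sum_eigs (Matrix.isHermitian_mul_conjTranspose_self (Matrix.vandermonde ζ))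
  have h2 : (Matrix.vandermonde ζ * (Matrix.vandermonde ζ)ᴴ).trace
      = ((∑ j, ∑ k : Fin n, Complex.normSq (ζ j) ^ (k : ℕ) : ℝ) : ℂ) := by
    rw [Matrix.trace]
    push_cast
    refine Finset.sum_congr rfl fun j _ => ?_
    rw [Matrix.diag_apply, _root_.gram_apply]
    refine Finset.sum_congr rfl fun k _ => ?_
    rw [Complex.mul_conj]
  rw [h2] at h1
  norm_cast at h1
  exact h1.symm

private lemma sum_normSq_le {n : ℕ} (ζ : Fin n → ℂ) (hζ : ∀ i, ‖ζ i‖ ≤ 1) :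
    ∑ j, ∑ k : Fin n, Complex.normSq (ζ j) ^ (k : ℕ) ≤ (n : ℝ) * n := by
  have hterm : ∀ j (k : Fin n), Complex.normSq (ζ j) ^ (k : ℕ) ≤ 1 := by
    intro j k
    apply pow_le_one₀ (Complex.normSq_nonneg _)
    rw [← Complex.sq_norm]
    exact pow_le_one₀ (norm_nonneg _) (hζ j)
  calc ∑ j, ∑ k : Fin n, Complex.normSq (ζ j) ^ (k : ℕ)
      ≤ ∑ _j : Fin n, ∑ _k : Fin n, (1:ℝ) := by
        apply Finset.sum_le_sum
        intro j _
        exact Finset.sum_le_sum fun k _ => hterm j k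
    _ = (n : ℝ) * n := by simp [Finset.sum_const, mul_comm]

private lemma hadamard_bound {n : ℕ} (hn : 2 ≤ n) (ζ : Fin n → ℂ)
    (hζ : ∀ i, ‖ζ i‖ ≤ 1) :
    ‖(Matrix.vandermonde ζ).det‖ ^ 2 ≤ (n : ℝ) ^ n := by
  have hn0 : (0:ℝ) < n := by positivity
  set l := (Matrix.isHermitian_mul_conjTranspose_self (Matrix.vandermonde ζ)).eigenvalues with hl
  have h0 : ∀ i, 0 ≤ l i := Matrix.eigenvalues_self_mul_conjTranspose_nonneg _
  have hsum : ∑ i, l i ≤ (n:ℝ) * n := (sum_eigs_eq ζ) ▸ sum_normSq_le ζ hζ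
  calc ‖(Matrix.vandermonde ζ).det‖ ^ 2 = ∏ i, l i := prod_eigs_eq ζ
    _ ≤ ((∑ i, l i) / n) ^ n := amgm_fin (by omega) l h0
    _ ≤ (n:ℝ) ^ n := by
        apply pow_le_pow_left₀ (div_nonneg (Finset.sum_nonneg fun i _ => h0 i) hn0.le)
        rw [div_le_iff₀ hn0]
        linarith

private lemma hadamard_eq {n : ℕ} (hn : 2 ≤ n) (ζ : Fin n → ℂ)
    (hζ : ∀ i, ‖ζ i‖ ≤ 1)
    (heq : ‖(Matrix.vandermonde ζ).det‖ ^ 2 = (n : ℝ) ^ n) :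
    (∀ j, ‖ζ j‖ = 1) ∧
    (∀ j l, j ≠ l → (∑ k : Fin n, (ζ j * (starRingEnd ℂ) (ζ l)) ^ (k : ℕ)) = 0) := by
  have hn0 : (0:ℝ) < n := by positivity
  set l := (Matrix.isHermitian_mul_conjTranspose_self (Matrix.vandermonde ζ)).eigenvalues with hl
  have h0 : ∀ i, 0 ≤ l i := Matrix.eigenvalues_self_mul_conjTranspose_nonneg _
  have hsum : ∑ i, l i ≤ (n:ℝ) * n := (sum_eigs_eq ζ) ▸ sum_normSq_le ζ hζ
  have hprod : ∏ i, l i = (n:ℝ) ^ n := (prod_eigs_eq ζ).symm.trans heq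
  have hall := eig_all_eq hn l h0 hsum hprod
  have hG : Matrix.vandermonde ζ * (Matrix.vandermonde ζ)ᴴ = ((n:ℝ) : ℂ) • 1 :=
    eq_smul_one_of_eigs_const _ _ hall
  constructor
  · intro j
    have hd : (∑ k : Fin n, (ζ j * (starRingEnd ℂ) (ζ j)) ^ (k : ℕ)) = ((n:ℝ) : ℂ) := by
      rw [← _root_.gram_apply, hG]
      simp [Matrix.smul_apply, Matrix.one_apply_eq]
    have hd2 : (∑ k : Fin n, ((Complex.normSq (ζ j) ^ (k:ℕ) : ℝ) : ℂ)) = ((n:ℝ) : ℂ) := by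
      rw [← hd]
      refine Finset.sum_congr rfl fun k _ => ?_
      rw [Complex.mul_conj]
      push_cast; rfl
    have hd3 : (∑ k : Fin n, Complex.normSq (ζ j) ^ (k:ℕ)) = (n:ℝ) := by
      exact_mod_cast hd2
    have hle : ∀ k ∈ (Finset.univ : Finset (Fin n)),
        Complex.normSq (ζ j) ^ (k:ℕ) ≤ (fun _ => (1:ℝ)) k := by
      intro k _
      apply pow_le_one₀ (Complex.normSq_nonneg _)
      rw [← Complex.sq_norm]
      exact pow_le_one₀ (norm_nonneg _) (hζ j)
    have hsum1 : (∑ k : Fin n, Complex.normSq (ζ j) ^ (k:ℕ)) = ∑ _k : Fin n, (1:ℝ) := by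
      rw [hd3]; simp
    have hk := (Finset.sum_eq_sum_iff_of_le hle).mp hsum1 ⟨1, by omega⟩ (Finset.mem_univ _)
    simp only [pow_one] at hk
    have h1 : Complex.normSq (ζ j) = 1 := by simpa using hk
    have h2 := congrArg Real.sqrt h1
    rwa [← Complex.sq_norm, Real.sqrt_sq (norm_nonneg _), Real.sqrt_one] at h2
  · intro j l' hjl
    rw [← _root_.gram_apply, hG]
    simp [Matrix.smul_apply, Matrix.one_apply_ne hjl]

private lemma exp_pow_eq (n : ℕ) (j : ℕ) :
    Complex.exp (2 * Real.pi * Complex.I / n) ^ j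
      = Complex.exp (2 * Real.pi * Complex.I * j / n) := by
  rw [← Complex.exp_nat_mul]
  congr 1
  ring

private lemma exists_perm_of_eq {n : ℕ} (hn : 2 ≤ n) (ζ : Fin n → ℂ)
    (habs : ∀ j, ‖ζ j‖ = 1)
    (hoff : ∀ j l, j ≠ l → (∑ k : Fin n, (ζ j * (starRingEnd ℂ) (ζ l)) ^ (k : ℕ)) = 0) :
    ∃ (u : ℂ) (σ : Equiv.Perm (Fin n)), ‖u‖ = 1 ∧
      ∀ j : Fin n, ζ (σ j) = u * Complex.exp (2 * Real.pi * Complex.I * j / n) := by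
  haveI : NeZero n := ⟨by omega⟩
  have hn0 : (n:ℂ) ≠ 0 := by exact_mod_cast (by omega : n ≠ 0)
  set η := Complex.exp (2 * Real.pi * Complex.I / n) with hη
  have hprim : IsPrimitiveRoot η n := Complex.isPrimitiveRoot_exp n (by omega)
  have hnormSq : ∀ j, ζ j * (starRingEnd ℂ) (ζ j) = 1 := by
    intro j
    rw [Complex.mul_conj]
    norm_cast
    rw [← Complex.sq_norm, habs j, one_pow]
  have hne1 : ∀ j l, j ≠ l → ζ j * (starRingEnd ℂ) (ζ l) ≠ 1 := by
    intro j l hjl h1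
    have := hoff j l hjl
    rw [Finset.sum_congr rfl (fun k _ => by rw [h1, one_pow])] at this
    simp at this
    omega
  have hpow1 : ∀ j l, j ≠ l → (ζ j * (starRingEnd ℂ) (ζ l)) ^ n = 1 := by
    intro j l hjl
    have hsum := hoff j l hjl
    set w := ζ j * (starRingEnd ℂ) (ζ l) with hw
    have hw1 : w ≠ 1 := hne1 j l hjl
    rw [Fin.sum_univ_eq_sum_range (fun k => w ^ k) n, geom_sum_eq hw1] at hsum
    rcases div_eq_zero_iff.mp hsum with h | h
    · exact (by linear_combination h : w ^ n = 1)
    · exact absurd (by linear_combination h) hw1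
  have hζinj : Function.Injective ζ := by
    intro j l h
    by_contra hjl
    apply hne1 j l hjl
    rw [h]
    exact hnormSq l
  have hwn : ∀ j : Fin n, (ζ j * (starRingEnd ℂ) (ζ 0)) ^ n = 1 := by
    intro j
    rcases eq_or_ne j 0 with rfl | hj0
    · rw [hnormSq, one_pow]
    · exact hpow1 j 0 hj0
  have hex : ∀ j : Fin n, ∃ k : Fin n, η ^ (k : ℕ) = ζ j * (starRingEnd ℂ) (ζ 0) := by
    intro j
    obtain ⟨i, hi, he⟩ := hprim.eq_pow_of_pow_eq_one (hwn j)
    exact ⟨⟨i, hi⟩, he⟩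
  choose g hg using hex
  have hζeq : ∀ j, ζ j = ζ 0 * η ^ (g j : ℕ) := by
    intro j
    calc ζ j = ζ j * (ζ 0 * (starRingEnd ℂ) (ζ 0)) := by rw [hnormSq 0, mul_one]
      _ = ζ 0 * (ζ j * (starRingEnd ℂ) (ζ 0)) := by ring
      _ = ζ 0 * η ^ (g j : ℕ) := by rw [hg j]
  have hginj : Function.Injective g := by
    intro j l h
    apply hζinj
    rw [hζeq j, hζeq l, h]
  have hgbij : Function.Bijective g := (Finite.injective_iff_bijective).mp hginj
  set e := Equiv.ofBijective g hgbij with he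
  refine ⟨ζ 0, e.symm, habs 0, fun j => ?_⟩
  have hgs : g (e.symm j) = j := e.apply_symm_apply j
  rw [hζeq (e.symm j), hgs, exp_pow_eq]

private lemma abs_det_roots {n : ℕ} (hn : 2 ≤ n) (u : ℂ) (hu : ‖u‖ = 1) :
    ‖(Matrix.vandermonde
        (fun j : Fin n => u * Complex.exp (2 * Real.pi * Complex.I * j / n))).det‖ ^ 2
      = (n : ℝ) ^ n := by
  haveI : NeZero n := ⟨by omega⟩
  set η := Complex.exp (2 * Real.pi * Complex.I / n) with hη
  have hprim : IsPrimitiveRoot η n := Complex.isPrimitiveRoot_exp n (by omega)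
  have hηn : η ^ n = 1 := hprim.pow_eq_one
  set ξ := fun j : Fin n => u * Complex.exp (2 * Real.pi * Complex.I * j / n) with hξ
  have hξ' : ∀ j : Fin n, ξ j = u * η ^ (j : ℕ) := by
    intro j
    rw [hξ, exp_pow_eq]
  have huu : u * (starRingEnd ℂ) u = 1 := by
    rw [Complex.mul_conj]
    norm_cast
    rw [← Complex.sq_norm, hu, one_pow]
  have hηu : η * (starRingEnd ℂ) η = 1 := by
    rw [Complex.mul_conj]
    norm_cast
    have habsη : ‖η‖ = 1 := by
      have h2 : (2 * (Real.pi:ℂ) * Complex.I / (n:ℂ)) = ((2 * Real.pi / n : ℝ) : ℂ) * Complex.I := by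
        push_cast; ring
      rw [hη, h2, Complex.norm_exp_ofReal_mul_I]
    rw [← Complex.sq_norm, habsη, one_pow]
  have hη0 : η ≠ 0 := Complex.exp_ne_zero _
  have hconjη : (starRingEnd ℂ) η = η⁻¹ := eq_inv_of_mul_eq_one_left
    (by rw [mul_comm]; exact hηu)
  have hgram : Matrix.vandermonde ξ * (Matrix.vandermonde ξ)ᴴ = ((n:ℂ)) • 1 := by
    ext j l
    rw [_root_.gram_apply]
    have hentry : ξ j * (starRingEnd ℂ) (ξ l) = η ^ (j:ℕ) * (η⁻¹) ^ (l:ℕ) := by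
      have h3 : ξ j * (starRingEnd ℂ) (ξ l)
          = (u * (starRingEnd ℂ) u) * (η ^ (j:ℕ) * ((starRingEnd ℂ) η) ^ (l:ℕ)) := by
        rw [hξ' j, hξ' l]
        simp only [_root_.map_mul, _root_.map_pow]
        ring
      rw [h3, huu, one_mul, hconjη]
    rw [hentry]
    rcases eq_or_ne j l with rfl | hjl
    · have hw1 : η ^ (j:ℕ) * (η⁻¹) ^ (j:ℕ) = 1 := by
        rw [← mul_pow, mul_inv_cancel₀ hη0, one_pow]
      rw [Finset.sum_congr rfl (fun k _ => by rw [hw1, one_pow])]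
      simp [Matrix.smul_apply, Matrix.one_apply_eq]
    · set w := η ^ (j:ℕ) * (η⁻¹) ^ (l:ℕ) with hw
      have hwn : w ^ n = 1 := by
        rw [hw, mul_pow, ← pow_mul, ← pow_mul, mul_comm (j:ℕ) n, mul_comm (l:ℕ) n,
          pow_mul, pow_mul, hηn, inv_pow, hηn, one_pow, inv_one, one_pow, mul_one]
      have hwne : w ≠ 1 := by
        intro h1
        have h2 : η ^ (j:ℕ) = η ^ (l:ℕ) := by
          have h4 := congrArg (· * η ^ (l:ℕ)) h1
          simp only [one_mul] at h4
          rw [mul_assoc, inv_pow, inv_mul_cancel₀ (pow_ne_zero _ hη0), mul_one] at h4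
          exact h4
        exact hjl (Fin.ext (hprim.pow_inj j.isLt l.isLt h2))
      have hsum0 : (∑ k : Fin n, w ^ (k:ℕ)) = 0 := by
        rw [Fin.sum_univ_eq_sum_range (fun k => w ^ k) n, geom_sum_eq hwne, hwn]
        simp
      rw [hsum0]
      simp [Matrix.smul_apply, Matrix.one_apply_ne hjl]
  have hdet := det_gram_eq ξ
  rw [hgram] at hdet
  have hdet2 : ((((n:ℝ)) : ℂ)) ^ n = ((‖(Matrix.vandermonde ξ).det‖ ^ 2 : ℝ) : ℂ) := by
    rw [← hdet, Matrix.smul_one_eq_diagonal, Matrix.det_diagonal]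
    simp
  have h5 : ((n:ℝ) ^ n : ℝ) = ‖(Matrix.vandermonde ξ).det‖ ^ 2 := by
    exact_mod_cast hdet2
  exact h5.symm

private lemma abs_det_perm {n : ℕ} (ζ : Fin n → ℂ) (σ : Equiv.Perm (Fin n)) :
    ‖(Matrix.vandermonde (ζ ∘ σ)).det‖
      = ‖(Matrix.vandermonde ζ).det‖ := by
  have h1 : Matrix.vandermonde (ζ ∘ σ) = (Matrix.vandermonde ζ).submatrix σ id := rfl
  rw [h1, Matrix.det_permute]
  rcases Int.units_eq_one_or (Equiv.Perm.sign σ) with h | h <;> rw [h] <;> simp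

private lemma rpow_bridge {n : ℕ} (hn : 2 ≤ n) (P : ℝ) (hP : 0 ≤ P) :
    (P ^ 2 ≤ (n:ℝ)^n → P ^ (2 / ((n : ℝ) * ((n : ℝ) - 1))) ≤ (n : ℝ) ^ (1 / ((n:ℝ) - 1))) ∧
    (P ^ (2 / ((n : ℝ) * ((n : ℝ) - 1))) = (n : ℝ) ^ (1 / ((n:ℝ) - 1)) ↔ P ^ 2 = (n:ℝ)^n) := by
  have hn0 : (0:ℝ) < n := by positivity
  have hn1 : (0:ℝ) < (n:ℝ) - 1 := by
    have : (2:ℝ) ≤ n := by exact_mod_cast hn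
    linarith
  have he : 0 < 2 / ((n : ℝ) * ((n : ℝ) - 1)) := by positivity
  set e := 2 / ((n : ℝ) * ((n : ℝ) - 1)) with hedef
  set Q := (n:ℝ) ^ ((n:ℝ)/2) with hQ
  have hQ0 : 0 ≤ Q := Real.rpow_nonneg hn0.le _
  have hQ2 : Q ^ 2 = (n:ℝ)^n := by
    rw [hQ, ← Real.rpow_natCast ((n:ℝ) ^ ((n:ℝ)/2)) 2, ← Real.rpow_mul hn0.le]
    norm_num
  have hQe : Q ^ e = (n : ℝ) ^ (1 / ((n:ℝ) - 1)) := by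
    rw [hQ, ← Real.rpow_mul hn0.le]
    congr 1
    rw [hedef]
    field_simp
  have hPQiff : P = Q ↔ P ^ 2 = (n:ℝ)^n := by
    rw [← hQ2]
    constructor
    · intro h; rw [h]
    · intro h
      exact (pow_left_strictMonoOn₀ (M₀ := ℝ) (n := 2) (by norm_num)).injOn
        (Set.mem_setOf.mpr hP) (Set.mem_setOf.mpr hQ0) h
  constructor
  · intro hle
    rw [← hQe]
    apply Real.rpow_le_rpow hP ?_ he.le
    rw [← hQ2] at hle
    exact (pow_le_pow_iff_left₀ hP hQ0 (by norm_num)).mp hle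
  · rw [← hPQiff, ← hQe]
    constructor
    · intro h
      rcases lt_trichotomy P Q with hlt | heq | hgt
      · exact absurd h (ne_of_lt (Real.rpow_lt_rpow hP hlt he))
      · exact heq
      · exact absurd h.symm (ne_of_lt (Real.rpow_lt_rpow hQ0 hgt he))
    · intro h; rw [h]

private lemma abs_exp_root (n : ℕ) (j : Fin n) :
    ‖Complex.exp (2 * Real.pi * Complex.I * j / n)‖ = 1 := by
  have h2 : (2 * (Real.pi:ℂ) * Complex.I * (j:ℕ) / (n:ℂ))
      = ((2 * Real.pi * (j:ℕ) / n : ℝ) : ℂ) * Complex.I := by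
    push_cast; ring
  rw [h2, Complex.norm_exp_ofReal_mul_I]

end Aux

/-- The `n`-diameter of a set `E ⊆ ℂ`. -/
noncomputable def nDiam (n : ℕ) (E : Set ℂ) : ℝ :=
  sSup {x : ℝ | ∃ ζ : Fin n → ℂ, (∀ i, ζ i ∈ E) ∧
    x = (∏ p ∈ Finset.univ.filter (fun p : Fin n × Fin n => p.1 < p.2),
        ‖ζ p.1 - ζ p.2‖) ^ (2 / ((n : ℝ) * ((n : ℝ) - 1)))}

/-- The `n`-diameter of the closed unit disk is `n^{1/(n-1)}`, and it is
attained exactly at (rotations of) the `n`-th roots of unity. -/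
theorem nDiam_closedBall (n : ℕ) (hn : 2 ≤ n) :
    nDiam n (closedBall (0 : ℂ) 1) = (n : ℝ) ^ (1 / ((n : ℝ) - 1)) ∧
    ∀ ζ : Fin n → ℂ, (∀ i, ζ i ∈ closedBall (0 : ℂ) 1) →
      ((∏ p ∈ Finset.univ.filter (fun p : Fin n × Fin n => p.1 < p.2),
          ‖ζ p.1 - ζ p.2‖) ^ (2 / ((n : ℝ) * ((n : ℝ) - 1))) =
        (n : ℝ) ^ (1 / ((n : ℝ) - 1)) ↔
      ∃ (u : ℂ) (σ : Equiv.Perm (Fin n)), ‖u‖ = 1 ∧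
        ∀ j : Fin n, ζ (σ j) = u * Complex.exp (2 * Real.pi * Complex.I * j / n)) := by
  have hball : ∀ (ζ : Fin n → ℂ), (∀ i, ζ i ∈ closedBall (0 : ℂ) 1) →
      ∀ i, ‖ζ i‖ ≤ 1 := by
    intro ζ h i
    have := h i
    rwa [Metric.mem_closedBall, Complex.dist_eq, sub_zero] at this
  have hPnn : ∀ (ζ : Fin n → ℂ),
      0 ≤ (∏ p ∈ Finset.univ.filter (fun p : Fin n × Fin n => p.1 < p.2),
        ‖ζ p.1 - ζ p.2‖) :=
    fun ζ => Finset.prod_nonneg fun p _ => norm_nonneg _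
  constructor
  · -- the sSup computation
    have hgreat : IsGreatest {x : ℝ | ∃ ζ : Fin n → ℂ, (∀ i, ζ i ∈ closedBall (0:ℂ) 1) ∧
        x = (∏ p ∈ Finset.univ.filter (fun p : Fin n × Fin n => p.1 < p.2),
          ‖ζ p.1 - ζ p.2‖) ^ (2 / ((n : ℝ) * ((n : ℝ) - 1)))}
        ((n : ℝ) ^ (1 / ((n : ℝ) - 1))) := by
      constructor
      · refine ⟨fun j : Fin n => (1:ℂ) * Complex.exp (2 * Real.pi * Complex.I * j / n),
          fun i => ?_, ?_⟩
        · simp [Metric.mem_closedBall, Complex.dist_eq, abs_exp_root n i]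
        · have h2 := abs_det_roots hn 1 (by simp)
          have h3 := (rpow_bridge hn _ (hPnn _)).2.mpr
            (by rw [prod_pairs_eq_abs_det]; exact h2)
          exact h3.symm
      · rintro x ⟨ζ, hb, rfl⟩
        apply (rpow_bridge hn _ (hPnn ζ)).1
        rw [prod_pairs_eq_abs_det]
        exact hadamard_bound hn ζ (hball ζ hb)
    rw [nDiam]
    exact hgreat.csSup_eq
  · intro ζ hb
    have hζ := hball ζ hb
    rw [(rpow_bridge hn _ (hPnn ζ)).2]
    constructor
    · intro h
      rw [prod_pairs_eq_abs_det] at h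
      obtain ⟨habs, hoff⟩ := hadamard_eq hn ζ hζ h
      exact exists_perm_of_eq hn ζ habs hoff
    · rintro ⟨u, σ, hu, hσ⟩
      have hcomp : ζ ∘ σ = fun j : Fin n => u * Complex.exp (2 * Real.pi * Complex.I * j / n) :=
        funext fun j => hσ j
      rw [prod_pairs_eq_abs_det, ← abs_det_perm ζ σ, hcomp]
      exact abs_det_roots hn u hu
end

section
/- Let α = exp(2πi/n) and 1 ≤ j ≤ n. Then ∑_{k=1}^{n-1} (1 - α^{jk})/(1 - α^k) = n - j. -/
open Finset

/-- For `α = exp(2πi/n)` and `1 ≤ j ≤ n`,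
`∑_{k=1}^{n-1} (1 - α^{jk})/(1 - α^k) = n - j`. -/
theorem sum_root_of_unity_ratio (n j : ℕ) (hj : 1 ≤ j) (hjn : j ≤ n) :
    ∑ k ∈ Finset.Ico 1 n,
        (1 - Complex.exp (2 * Real.pi * Complex.I / n) ^ (j * k)) /
          (1 - Complex.exp (2 * Real.pi * Complex.I / n) ^ k) =
      (n : ℂ) - (j : ℂ) := by
  have hn : 0 < n := hj.trans hjn
  set ζ := Complex.exp (2 * Real.pi * Complex.I / n) with hζ
  have hprim : IsPrimitiveRoot ζ n := Complex.isPrimitiveRoot_exp n hn.ne'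
  have key : ∀ m < n, ∑ k ∈ Finset.Ico 1 n, (ζ ^ m) ^ k
      = (if m = 0 then (n : ℂ) else 0) - 1 := by
    intro m hm
    have hfull : ∑ k ∈ Finset.range n, (ζ ^ m) ^ k
        = if m = 0 then (n : ℂ) else 0 := by
      rcases eq_or_ne m 0 with rfl | hm0
      · simp
      · have hne1 : ζ ^ m ≠ 1 :=
          hprim.pow_ne_one_of_pos_of_lt hm0 hm
        have hpow : (ζ ^ m) ^ n = 1 := by
          rw [← pow_mul, mul_comm, pow_mul, hprim.pow_eq_one, one_pow]
        rw [geom_sum_eq hne1, if_neg hm0, hpow]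
        simp
    have hsplit : ∑ k ∈ Finset.range n, (ζ ^ m) ^ k
        = (ζ ^ m) ^ 0 + ∑ k ∈ Finset.Ico 1 n, (ζ ^ m) ^ k := by
      rw [Finset.range_eq_Ico, Finset.sum_eq_sum_Ico_succ_bot hn]
    rw [hsplit, pow_zero] at hfull
    linear_combination hfull
  have step1 : ∀ k ∈ Finset.Ico 1 n,
      (1 - ζ ^ (j * k)) / (1 - ζ ^ k) = ∑ m ∈ Finset.range j, (ζ ^ m) ^ k := by
    intro k hk
    rw [Finset.mem_Ico] at hk
    have h1 : ζ ^ k ≠ 1 := hprim.pow_ne_one_of_pos_of_lt (by omega) hk.2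
    have hc : ∑ m ∈ Finset.range j, (ζ ^ m) ^ k
        = ∑ m ∈ Finset.range j, (ζ ^ k) ^ m := by
      refine Finset.sum_congr rfl fun m _ => ?_
      rw [← pow_mul, ← pow_mul, mul_comm]
    rw [hc, geom_sum_eq h1, ← pow_mul, mul_comm k j,
        show (1 : ℂ) - ζ ^ (j * k) = -(ζ ^ (j * k) - 1) by ring,
        show (1 : ℂ) - ζ ^ k = -(ζ ^ k - 1) by ring, neg_div_neg_eq]
  rw [Finset.sum_congr rfl step1, Finset.sum_comm]
  have step2 : ∀ m ∈ Finset.range j, ∑ k ∈ Finset.Ico 1 n, (ζ ^ m) ^ k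
      = (if m = 0 then (n : ℂ) else 0) - 1 :=
    fun m hm => key m (lt_of_lt_of_le (Finset.mem_range.mp hm) hjn)
  rw [Finset.sum_congr rfl step2, Finset.sum_sub_distrib]
  have h0 : (0 : ℕ) ∈ Finset.range j := Finset.mem_range.mpr hj
  rw [Finset.sum_ite_eq' (Finset.range j) 0 (fun _ => (n : ℂ)), if_pos h0]
  simp
end

section
/- Let α = exp(2πi/n), let A = ∑_{k=1}^{n-1} 1/(1 - α^k), and let 1 ≤ p ≤ n. Then ∑_{k=1}^{n-1} (1 - α^{kp})/(1 - α^k)² = pA - (n - p/2)(p - 1). -/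
open Finset

/-- For `α = exp(2πi/n)`, `A = ∑_{k=1}^{n-1} 1/(1-α^k)` and `1 ≤ p ≤ n`,
`∑_{k=1}^{n-1} (1 - α^{kp})/(1 - α^k)² = pA - (n - p/2)(p - 1)`. -/
theorem sum_root_of_unity_sq (n p : ℕ) (hp : 1 ≤ p) (hpn : p ≤ n)
    (A : ℂ)
    (hA : A = ∑ k ∈ Finset.Ico 1 n,
      1 / (1 - Complex.exp (2 * Real.pi * Complex.I / n) ^ k)) :
    ∑ k ∈ Finset.Ico 1 n,
        (1 - Complex.exp (2 * Real.pi * Complex.I / n) ^ (k * p)) /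
          (1 - Complex.exp (2 * Real.pi * Complex.I / n) ^ k) ^ 2 =
      (p : ℂ) * A - ((n : ℂ) - (p : ℂ) / 2) * ((p : ℂ) - 1) := by
  have hn : n ≠ 0 := by omega
  set ζ := Complex.exp (2 * Real.pi * Complex.I / n) with hζ
  have hprim : IsPrimitiveRoot ζ n := Complex.isPrimitiveRoot_exp n hn
  have hne : ∀ k, 0 < k → k < n → (1 : ℂ) - ζ ^ k ≠ 0 := by
    intro k hk1 hk2
    exact sub_ne_zero.mpr (Ne.symm (hprim.pow_ne_one_of_pos_of_lt hk1.ne' hk2))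
  -- character sums
  have hc : ∀ i, i < n → ∑ k ∈ Ico 1 n, ζ ^ (k * i) =
      if i = 0 then (n : ℂ) - 1 else -1 := by
    intro i hi
    rcases Nat.eq_zero_or_pos i with h0 | h0
    · subst h0
      simp only [Nat.mul_zero, pow_zero, sum_const, Nat.card_Ico, nsmul_eq_mul,
        mul_one, if_pos rfl]
      push_cast [Nat.cast_sub (by omega : 1 ≤ n)]
      ring
    · rw [if_neg (by omega)]
      have hx : ζ ^ i ≠ 1 := hprim.pow_ne_one_of_pos_of_lt h0.ne' hi
      have hgeom : ∑ k ∈ range n, (ζ ^ i) ^ k = 0 := by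
        rw [geom_sum_eq hx]
        have h1 : (ζ ^ i) ^ n = 1 := by
          rw [← pow_mul, mul_comm, pow_mul, hprim.pow_eq_one, one_pow]
        simp [h1]
      have hsplit : ∑ k ∈ range n, (ζ ^ i) ^ k
          = 1 + ∑ k ∈ Ico 1 n, (ζ ^ i) ^ k := by
        rw [range_eq_Ico, sum_eq_sum_Ico_succ_bot (by omega : 0 < n)]
        simp
      have hS : ∑ k ∈ Ico 1 n, (ζ ^ i) ^ k = -1 := by
        rw [hsplit] at hgeom
        linear_combination hgeom
      calc ∑ k ∈ Ico 1 n, ζ ^ (k * i) = ∑ k ∈ Ico 1 n, (ζ ^ i) ^ k := by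
            refine sum_congr rfl fun k _ => ?_
            rw [← pow_mul, mul_comm]
        _ = -1 := hS
  -- per-term identity
  have hterm : ∀ k, 0 < k → k < n →
      (1 - ζ ^ (k * p)) / (1 - ζ ^ k) ^ 2
        = (p : ℂ) * (1 / (1 - ζ ^ k)) - ∑ j ∈ range p, ∑ i ∈ range j, ζ ^ (k * i) := by
    intro k hk1 hk2
    have hx : (1 : ℂ) - ζ ^ k ≠ 0 := hne k hk1 hk2
    have hpow : ∀ m : ℕ, ζ ^ (k * m) = (ζ ^ k) ^ m := fun m => pow_mul ζ k m
    have hgs : ∀ m : ℕ, (∑ i ∈ range m, (ζ ^ k) ^ i) * (1 - ζ ^ k) = 1 - (ζ ^ k) ^ m := by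
      intro m
      linear_combination -geom_sum_mul (ζ ^ k) m
    have h1 : ∀ j : ℕ, ∑ i ∈ range j, (ζ ^ k) ^ i = (1 - (ζ ^ k) ^ j) / (1 - ζ ^ k) := by
      intro j
      rw [eq_div_iff hx]
      exact hgs j
    simp_rw [hpow, h1]
    rw [← sum_div]
    have hS : ∑ j ∈ range p, (1 - (ζ ^ k) ^ j) = (p : ℂ) - ∑ j ∈ range p, (ζ ^ k) ^ j := by
      rw [sum_sub_distrib, sum_const, card_range, nsmul_eq_mul, mul_one]
    rw [hS]
    field_simp
    linear_combination (-1 : ℂ) * hpow p +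
      (0 : ℂ) * hpow 2 + (-1 : ℂ) * hgs p
  -- inner evaluated sum
  have hinner : ∀ j, j ≤ n → ∑ i ∈ range j, ∑ k ∈ Ico 1 n, ζ ^ (k * i)
      = if j = 0 then 0 else (n : ℂ) - j := by
    intro j hj
    rcases Nat.eq_zero_or_pos j with h0 | h0
    · simp [h0]
    · rw [if_neg (by omega)]
      rw [range_eq_Ico, sum_eq_sum_Ico_succ_bot h0, hc 0 (by omega), if_pos rfl]
      have h2 : ∑ i ∈ Ico 1 j, ∑ k ∈ Ico 1 n, ζ ^ (k * i) = ∑ _i ∈ Ico 1 j, (-1 : ℂ) := by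
        refine sum_congr rfl fun i hi => ?_
        simp only [mem_Ico] at hi
        rw [hc i (by omega), if_neg (by omega)]
      rw [h2, sum_const, Nat.card_Ico, nsmul_eq_mul]
      push_cast [Nat.cast_sub h0]
      ring
  -- Gauss sum
  have hgauss : ∑ j ∈ range p, (j : ℂ) = (p : ℂ) * ((p : ℂ) - 1) / 2 := by
    have h := Finset.sum_range_id_mul_two p
    have h2 : ((∑ i ∈ range p, i : ℕ) : ℂ) * 2 = (p : ℂ) * ((p : ℂ) - 1) := by
      rw [← Nat.cast_ofNat, ← Nat.cast_mul, h]
      push_cast [Nat.cast_sub hp]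
      ring
    push_cast at h2
    linear_combination h2 / 2
  calc ∑ k ∈ Ico 1 n, (1 - ζ ^ (k * p)) / (1 - ζ ^ k) ^ 2
      = ∑ k ∈ Ico 1 n,
          ((p : ℂ) * (1 / (1 - ζ ^ k)) - ∑ j ∈ range p, ∑ i ∈ range j, ζ ^ (k * i)) := by
        refine sum_congr rfl fun k hk => ?_
        simp only [mem_Ico] at hk
        exact hterm k (by omega) hk.2
    _ = (p : ℂ) * A - ∑ j ∈ range p, ∑ i ∈ range j, ∑ k ∈ Ico 1 n, ζ ^ (k * i) := by
        rw [sum_sub_distrib, ← mul_sum, ← hA]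
        congr 1
        rw [sum_comm]
        exact sum_congr rfl fun j _ => sum_comm
    _ = (p : ℂ) * A - ∑ j ∈ range p, (if j = 0 then 0 else (n : ℂ) - j) := by
        congr 1
        refine sum_congr rfl fun j hj => ?_
        simp only [mem_range] at hj
        exact hinner j (by omega)
    _ = (p : ℂ) * A - ((n : ℂ) - (p : ℂ) / 2) * ((p : ℂ) - 1) := by
        congr 1
        rw [range_eq_Ico, sum_eq_sum_Ico_succ_bot (by omega : 0 < p), if_pos rfl]
        have h2 : ∑ j ∈ Ico 1 p, (if j = 0 then 0 else (n : ℂ) - j)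
            = ∑ j ∈ Ico 1 p, ((n : ℂ) - j) := by
          refine sum_congr rfl fun j hj => ?_
          simp only [mem_Ico] at hj
          rw [if_neg (by omega)]
        rw [h2, sum_sub_distrib, sum_const, Nat.card_Ico, nsmul_eq_mul]
        have h3 : ∑ j ∈ Ico 1 p, (j : ℂ) = (p : ℂ) * ((p : ℂ) - 1) / 2 := by
          have := hgauss
          rwa [range_eq_Ico, sum_eq_sum_Ico_succ_bot (by omega : 0 < p),
            Nat.cast_zero, zero_add] at this
        rw [h3]
        push_cast [Nat.cast_sub hp]
        ring
end

section
/- Let F be a one-to-one analytic map of the unit disk D onto a simply connected domain Ω, and let G be an analytic square root of F' with power series G(z) = ∑ b_n z^n. Then for 0 < r < 1, r^{-1} · Length(∂F(rD)) = 2π ∑_{n=0}^∞ |b_n|² r^{2n}; consequently r ↦ r^{-1} Length(∂F(rD)) is strictly increasing unless F is linear. -/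
open Metric Set Filter Complex MeasureTheory intervalIntegral

private lemma aux_linear {F : ℂ → ℂ} (hF : DifferentiableOn ℂ F (ball 0 1)) {a : ℂ}
    (ha : ∀ z ∈ ball (0:ℂ) 1, deriv F z = a) :
    ∀ z ∈ ball (0:ℂ) 1, F z = a * z + F 0 := by
  intro z hz
  have h0 : (0:ℂ) ∈ ball (0:ℂ) 1 := by simp
  have hHd : DifferentiableOn ℂ (fun w => F w - a * w) (ball 0 1) :=
    hF.sub ((differentiable_id.const_mul a).differentiableOn)
  have key : F z - a * z = F 0 - a * 0 := by
    apply (convex_ball (0:ℂ) 1).is_const_of_fderivWithin_eq_zero hHd _ hz h0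
    intro x hx
    rw [fderivWithin_of_isOpen isOpen_ball hx]
    have hdF : DifferentiableAt ℂ F x := hF.differentiableAt (isOpen_ball.mem_nhds hx)
    have hd : HasDerivAt (fun w => F w - a * w) (deriv F x - a * 1) x :=
      hdF.hasDerivAt.sub ((hasDerivAt_id x).const_mul a)
    rw [ha x hx] at hd
    simp only [mul_one, sub_self] at hd
    rw [hd.hasFDerivAt.fderiv]
    ext
    simp
  rw [show a * z + F 0 = a * z + (F 0 - a * 0) by ring]
  linear_combination key

private lemma aux_geom {b : ℕ → ℂ} {w : ℂ} (hw : 0 < ‖w‖)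
    (hs : Summable (fun m => b m * w^m)) {t : ℝ} (h0 : 0 ≤ t) (htx : t < ‖w‖) :
    Summable (fun m => ‖b m‖ * t^m) := by
  set x : ℝ := ‖w‖ with hxdef
  have h1 : Tendsto (fun m => ‖b m * w^m‖) atTop (nhds 0) := by
    simpa using hs.tendsto_atTop_zero.norm
  have h2 : ∀ᶠ m in atTop, ‖b m * w^m‖ ≤ 1 := h1.eventually_le_const one_pos
  apply Summable.of_norm_bounded_eventually (g := fun m => (t/x)^m)
  · exact summable_geometric_of_lt_one (by positivity) (by rw [div_lt_one hw]; exact htx)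
  · rw [Nat.cofinite_eq_atTop]
    filter_upwards [h2] with m hm
    have hb : ‖b m * w^m‖ = ‖b m‖ * x^m := by
      rw [norm_mul, norm_pow]
    have hxm : (0:ℝ) < x ^ m := pow_pos hw m
    have : ‖b m‖ * t^m = ‖b m * w^m‖ * (t/x)^m := by
      rw [hb, div_pow]; field_simp
    rw [Real.norm_of_nonneg (by positivity), this]
    calc ‖b m * w^m‖ * (t/x)^m ≤ 1 * (t/x)^m := by
          apply mul_le_mul_of_nonneg_right hm (by positivity)
      _ = (t/x)^m := one_mul _

private lemma aux_summable {F G : ℂ → ℂ} {b : ℕ → ℂ}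
    (hF : DifferentiableOn ℂ F (ball 0 1))
    (hinj : Set.InjOn F (ball (0:ℂ) 1))
    (hG : DifferentiableOn ℂ G (ball 0 1))
    (hsq : ∀ z ∈ ball (0:ℂ) 1, G z ^ 2 = deriv F z)
    (hb : ∀ z ∈ ball (0:ℂ) 1, G z = ∑' m : ℕ, b m * z ^ m)
    {t : ℝ} (ht : t ∈ Set.Ioo (0:ℝ) 1) :
    Summable (fun m => ‖b m‖ * t ^ m) := by
  obtain ⟨ht0, ht1⟩ := ht
  have hex : ∃ x ∈ Set.Ioo t 1, Summable (fun m => b m * (x:ℂ)^m) := by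
    by_contra hcon
    push_neg at hcon
    set x₀ : ℝ := (t+1)/2 with hx₀def
    have hx₀ : x₀ ∈ Set.Ioo t 1 := ⟨by simp only [hx₀def]; linarith, by simp only [hx₀def]; linarith⟩
    have hx₀0 : 0 < x₀ := lt_trans ht0 hx₀.1
    -- G vanishes on the annulus x₀ < |z| < 1
    have hzero : ∀ z : ℂ, x₀ < ‖z‖ → ‖z‖ < 1 → G z = 0 := by
      intro z h1 h2
      have hzball : z ∈ ball (0:ℂ) 1 := by
        simpa [mem_ball, Complex.dist_eq] using h2
      have hns : ¬ Summable (fun m => b m * z^m) := by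
        intro hsz
        set x₁ : ℝ := (x₀ + ‖z‖)/2 with hx₁def
        have hx₁1 : x₀ < x₁ := by simp only [hx₁def]; linarith
        have hx₁2 : x₁ < ‖z‖ := by simp only [hx₁def]; linarith
        have hx₁0 : 0 < x₁ := lt_trans hx₀0 hx₁1
        have hx₁mem : x₁ ∈ Set.Ioo t 1 := ⟨lt_trans hx₀.1 hx₁1, lt_trans hx₁2 h2⟩
        apply hcon x₁ hx₁mem
        have habs : Summable (fun m => ‖b m‖ * x₁^m) :=
          aux_geom (lt_trans hx₀0 h1) hsz (le_of_lt hx₁0) hx₁2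
        apply Summable.of_norm
        convert habs using 2 with m
        simp [map_mul, map_pow, Complex.norm_real, abs_of_pos hx₁0]
      rw [hb z hzball, tsum_eq_zero_of_not_summable hns]
    -- identity theorem: G ≡ 0 on the ball
    have hGana : AnalyticOnNhd ℂ G (ball 0 1) := hG.analyticOnNhd isOpen_ball
    set z₀ : ℂ := (((x₀+1)/2 : ℝ) : ℂ) with hz₀def
    have habsz₀ : ‖z₀‖ = (x₀+1)/2 := by
      rw [hz₀def, Complex.norm_real, Real.norm_of_nonneg (by linarith)]
    have hz₀ball : z₀ ∈ ball (0:ℂ) 1 := by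
      simp only [mem_ball, Complex.dist_eq, sub_zero, habsz₀]; linarith [hx₀.2]
    have hev : G =ᶠ[nhds z₀] 0 := by
      have hopen : IsOpen {z : ℂ | x₀ < ‖z‖ ∧ ‖z‖ < 1} :=
        (isOpen_lt continuous_const continuous_norm).inter
          (isOpen_lt continuous_norm continuous_const)
      apply Filter.eventuallyEq_of_mem (hopen.mem_nhds _)
      · intro z hz; exact hzero z hz.1 hz.2
      · exact ⟨by rw [habsz₀]; linarith [hx₀.1, ht0], by rw [habsz₀]; linarith [hx₀.2]⟩
    have hGzero : EqOn G 0 (ball (0:ℂ) 1) :=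
      hGana.eqOn_zero_of_preconnected_of_eventuallyEq_zero
        (convex_ball (0:ℂ) 1).isPreconnected hz₀ball hev
    -- then F is constant, contradicting injectivity
    have hderiv : ∀ z ∈ ball (0:ℂ) 1, deriv F z = 0 := by
      intro z hz
      rw [← hsq z hz, hGzero hz]
      simp
    have hFconst := aux_linear hF hderiv
    have h12 : (1/2 : ℂ) ∈ ball (0:ℂ) 1 := by
      simp only [mem_ball, Complex.dist_eq, sub_zero]
      rw [show ‖(1/2:ℂ)‖ = 1/2 by rw [norm_div]; norm_num]
      norm_num
    have h0b : (0:ℂ) ∈ ball (0:ℂ) 1 := by simp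
    have : (1/2 : ℂ) = 0 := by
      apply hinj h12 h0b
      rw [hFconst _ h12, hFconst _ h0b]
      ring
    norm_num at this
  obtain ⟨x, hxm, hxs⟩ := hex
  have hx0 : (0:ℝ) < x := lt_trans ht0 hxm.1
  exact aux_geom (by simpa [Complex.norm_real, abs_of_pos hx0] using hx0) hxs (le_of_lt ht0)
    (by simpa [Complex.norm_real, abs_of_pos hx0] using hxm.1)

private lemma aux_parseval (c : ℕ → ℂ) (hc : Summable fun m => ‖c m‖) :
    ∫ θ in (0:ℝ)..(2*Real.pi),
        ‖∑' m : ℕ, c m * Complex.exp (θ * Complex.I) ^ m‖ ^ 2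
      = 2 * Real.pi * ∑' m : ℕ, ‖c m‖ ^ 2 := by
  have two_pi_pos : (0:ℝ) < 2 * Real.pi := by positivity
  have hcn : Summable fun m => ‖c m‖ := by simpa using hc
  set u : ℝ → ℂ := fun θ => ∑' m : ℕ, c m * Complex.exp (θ * Complex.I) ^ m with hu_def
  have hnorm_term : ∀ (m : ℕ) (θ : ℝ), ‖c m * Complex.exp (θ * Complex.I) ^ m‖ = ‖c m‖ := by
    intro m θ
    simp [map_mul, map_pow, Complex.norm_exp_ofReal_mul_I]
  have hterm_cont : ∀ m : ℕ, Continuous fun θ : ℝ => c m * Complex.exp (θ * Complex.I) ^ m := by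
    intro m
    exact continuous_const.mul (((Complex.continuous_ofReal.mul continuous_const).cexp).pow m)
  have hu_cont : Continuous u :=
    continuous_tsum hterm_cont hcn (fun m θ => le_of_eq (hnorm_term m θ))
  -- the double-indexed family
  set T : ℕ × ℕ → ℝ → ℂ := fun p θ =>
    (c p.1 * Complex.exp (θ * Complex.I) ^ p.1) *
      star (c p.2 * Complex.exp (θ * Complex.I) ^ p.2) with hT_def
  have hTnorm : ∀ (p : ℕ × ℕ) (θ : ℝ), ‖T p θ‖ = ‖c p.1‖ * ‖c p.2‖ := by
    intro p θ
    rw [hT_def]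
    simp only [norm_mul, norm_star]
    rw [norm_pow, norm_pow]
    simp [Complex.norm_exp_ofReal_mul_I]
  -- pointwise expansion
  have hexpand : ∀ θ : ℝ, u θ * star (u θ) = ∑' p : ℕ × ℕ, T p θ := by
    intro θ
    have hstar : star (u θ) = ∑' n : ℕ, star (c n * Complex.exp (θ * Complex.I) ^ n) := by
      rw [hu_def]; exact tsum_star
    rw [hu_def, hstar]
    exact tsum_mul_tsum_of_summable_norm
      (by simpa [hnorm_term] using hcn)
      (by simpa [norm_star, hnorm_term] using hcn)
  have hprod : Summable fun p : ℕ × ℕ => ‖c p.1‖ * ‖c p.2‖ := by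
    apply summable_mul_of_summable_norm (f := fun m => ‖c m‖) (g := fun m => ‖c m‖) <;>
      simpa [norm_norm] using hcn
  -- each T p is integrable on Ioc 0 (2π)
  have hT_cont : ∀ p : ℕ × ℕ, Continuous (T p) := fun p =>
    (hterm_cont p.1).mul (continuous_star.comp (hterm_cont p.2))
  have hT_int : ∀ p : ℕ × ℕ, Integrable (T p) (volume.restrict (Ioc (0:ℝ) (2*Real.pi))) :=
    fun p => (hT_cont p).integrableOn_Ioc
  have hT_intnorm : ∀ p : ℕ × ℕ,
      (∫ θ in Ioc (0:ℝ) (2*Real.pi), ‖T p θ‖) = 2 * Real.pi * (‖c p.1‖ * ‖c p.2‖) := by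
    intro p
    simp only [hTnorm]
    rw [setIntegral_const, Real.volume_real_Ioc_of_le two_pi_pos.le, smul_eq_mul, sub_zero]
  -- swap integral and sum
  have hswap : (∑' p : ℕ × ℕ, ∫ θ in Ioc (0:ℝ) (2*Real.pi), T p θ)
      = ∫ θ in Ioc (0:ℝ) (2*Real.pi), ∑' p : ℕ × ℕ, T p θ := by
    apply integral_tsum_of_summable_integral_norm hT_int
    simp only [hT_intnorm]
    exact hprod.mul_left _
  -- compute each integral
  have hcalc : ∀ p : ℕ × ℕ, (∫ θ in Ioc (0:ℝ) (2*Real.pi), T p θ)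
      = if p.2 = p.1 then ((2 * Real.pi : ℝ) : ℂ) * (c p.1 * star (c p.1)) else 0 := by
    rintro ⟨m, n⟩
    have hT' : ∀ θ : ℝ, T (m, n) θ
        = (c m * star (c n)) * Complex.exp ((((m:ℤ) - n : ℤ) : ℂ) * Complex.I * θ) := by
      intro θ
      rw [hT_def]
      simp only
      rw [star_mul', star_pow]
      have h1 : star (Complex.exp (θ * Complex.I)) = Complex.exp (-(θ * Complex.I)) := by
        rw [show (star (Complex.exp (θ * Complex.I)) : ℂ)
            = (starRingEnd ℂ) (Complex.exp (θ * Complex.I)) from rfl, ← Complex.exp_conj]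
        congr 1
        rw [map_mul, Complex.conj_ofReal, Complex.conj_I]
        ring
      have hmul : Complex.exp ((m:ℂ) * ((θ:ℂ) * Complex.I))
          * Complex.exp ((n:ℂ) * -((θ:ℂ) * Complex.I))
          = Complex.exp ((((m:ℤ) - n : ℤ) : ℂ) * Complex.I * θ) := by
        rw [← Complex.exp_add]
        congr 1
        push_cast
        ring
      rw [h1, ← Complex.exp_nat_mul, ← Complex.exp_nat_mul, ← hmul]
      ring
    by_cases hmn : n = m
    · subst hmn
      simp only [if_pos rfl]
      have : ∀ θ : ℝ, T (n, n) θ = c n * star (c n) := by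
        intro θ
        rw [hT' θ]
        simp
      simp only [this]
      rw [setIntegral_const, Real.volume_real_Ioc_of_le two_pi_pos.le, sub_zero]
      simp [Complex.real_smul]
    · rw [if_neg hmn]
      have hne : ((((m:ℤ) - n : ℤ) : ℂ)) * Complex.I ≠ 0 := by
        apply mul_ne_zero _ Complex.I_ne_zero
        rw [Int.cast_ne_zero, sub_ne_zero]
        exact fun h => hmn (by exact_mod_cast h.symm)
      rw [← intervalIntegral.integral_of_le two_pi_pos.le]
      simp only [hT']
      rw [intervalIntegral.integral_const_mul]
      rw [show (∫ θ : ℝ in (0:ℝ)..(2*Real.pi),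
          Complex.exp ((((m:ℤ) - n : ℤ) : ℂ) * Complex.I * θ))
        = (Complex.exp ((((m:ℤ) - n : ℤ) : ℂ) * Complex.I * (2*Real.pi:ℝ))
          - Complex.exp ((((m:ℤ) - n : ℤ) : ℂ) * Complex.I * (0:ℝ)))
          / ((((m:ℤ) - n : ℤ) : ℂ) * Complex.I) from integral_exp_mul_complex hne]
      have h2 : ((((m:ℤ) - n : ℤ) : ℂ)) * Complex.I * ((2*Real.pi:ℝ):ℂ)
          = (((m:ℤ) - n : ℤ) : ℂ) * (2 * (Real.pi:ℂ) * Complex.I) := by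
        push_cast
        ring
      rw [h2, Complex.exp_int_mul_two_pi_mul_I]
      simp
  -- identify z * star z with |z|^2
  have hmulstar : ∀ z : ℂ, z * star z = ((‖z‖ ^ 2 : ℝ) : ℂ) := by
    intro z
    rw [show star z = (starRingEnd ℂ) z from rfl, Complex.mul_conj, Complex.normSq_eq_norm_sq]
  -- summability of |c m|^2
  have hsq_sum : Summable (fun m => ‖c m‖ ^ 2) := by
    have hC : ∀ m, ‖c m‖ ≤ ∑' k, ‖c k‖ :=
      fun m => Summable.le_tsum hc m (fun k _ => norm_nonneg _)
    have h1 : ∀ m, ‖c m‖ ^ 2 ≤ (∑' k, ‖c k‖) * ‖c m‖ := by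
      intro m
      rw [sq]
      exact mul_le_mul_of_nonneg_right (hC m) (norm_nonneg _)
    exact Summable.of_nonneg_of_le (fun m => by positivity) h1 (hc.mul_left _)
  -- sum over the diagonal
  have hdiagsum : Summable (fun p : ℕ × ℕ =>
      if p.2 = p.1 then ((2 * Real.pi : ℝ) : ℂ) * (c p.1 * star (c p.1)) else 0) := by
    apply Summable.of_norm_bounded
      (g := fun p : ℕ × ℕ => (2 * Real.pi) * (‖c p.1‖ * ‖c p.2‖)) (hprod.mul_left _)
    rintro ⟨m, n⟩
    dsimp only
    by_cases h : n = m
    · subst h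
      rw [if_pos rfl, norm_mul, norm_mul, norm_star, Complex.norm_real,
        Real.norm_of_nonneg two_pi_pos.le]
    · rw [if_neg h, norm_zero]
      positivity
  have hdiag : (∑' p : ℕ × ℕ,
        if p.2 = p.1 then ((2 * Real.pi : ℝ) : ℂ) * (c p.1 * star (c p.1)) else 0)
      = ((2 * Real.pi : ℝ) : ℂ) * ∑' m : ℕ, c m * star (c m) := by
    rw [Summable.tsum_prod' hdiagsum
      (fun m => (hasSum_ite_eq m (((2 * Real.pi : ℝ) : ℂ) * (c m * star (c m)))).summable)]
    rw [show (∑' (m : ℕ), ∑' (n : ℕ),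
        if n = m then ((2 * Real.pi : ℝ) : ℂ) * (c m * star (c m)) else 0)
      = ∑' m : ℕ, ((2 * Real.pi : ℝ) : ℂ) * (c m * star (c m)) from
        tsum_congr (fun m => tsum_ite_eq m _)]
    exact tsum_mul_left
  -- the complex-valued integral
  have hcomplex : (∫ θ in Ioc (0:ℝ) (2*Real.pi), u θ * star (u θ))
      = ((2 * Real.pi * ∑' m : ℕ, ‖c m‖ ^ 2 : ℝ) : ℂ) := by
    rw [show (fun θ => u θ * star (u θ)) = fun θ => ∑' p : ℕ × ℕ, T p θ from funext hexpand]
    rw [← hswap, tsum_congr hcalc, hdiag,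
      (tsum_congr (fun m => hmulstar (c m)) :
        (∑' m : ℕ, c m * star (c m)) = ∑' m : ℕ, ((‖c m‖ ^ 2 : ℝ) : ℂ)),
      ← Complex.ofReal_tsum, ← Complex.ofReal_mul]
  -- take real parts
  have hInt : Integrable (fun θ => u θ * star (u θ))
      (volume.restrict (Ioc (0:ℝ) (2*Real.pi))) :=
    (hu_cont.mul (continuous_star.comp hu_cont)).integrableOn_Ioc
  rw [intervalIntegral.integral_of_le two_pi_pos.le]
  have hre : ∀ θ : ℝ, ‖u θ‖ ^ 2 = (u θ * star (u θ)).re := by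
    intro θ
    rw [hmulstar, Complex.ofReal_re]
  have hre' : ∀ θ : ℝ, ‖∑' m : ℕ, c m * Complex.exp (θ * Complex.I) ^ m‖ ^ 2
      = (u θ * star (u θ)).re := hre
  simp only [hre']
  have hcomm := ContinuousLinearMap.integral_comp_comm Complex.reCLM hInt
  simp only [Complex.reCLM_apply] at hcomm
  rw [hcomm, hcomplex, Complex.ofReal_re]


private lemma aux_sq_summable {b : ℕ → ℂ} {r : ℝ} (hr : 0 ≤ r)
    (h : Summable fun m => ‖b m‖ * r ^ m) :
    Summable fun m => ‖b m‖ ^ 2 * r ^ (2 * m) := by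
  have hnn : ∀ m, 0 ≤ ‖b m‖ * r ^ m :=
    fun m => mul_nonneg (norm_nonneg _) (pow_nonneg hr _)
  have hC : ∀ m, ‖b m‖ * r ^ m ≤ ∑' k, ‖b k‖ * r ^ k :=
    fun m => Summable.le_tsum h m (fun k _ => hnn k)
  have h2 : Summable fun m => (‖b m‖ * r ^ m) ^ 2 := by
    have h1 : ∀ m, (‖b m‖ * r ^ m) ^ 2
        ≤ (∑' k, ‖b k‖ * r ^ k) * (‖b m‖ * r ^ m) := by
      intro m
      rw [sq]
      exact mul_le_mul_of_nonneg_right (hC m) (hnn m)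
    exact Summable.of_nonneg_of_le (fun m => by positivity) h1 (h.mul_left _)
  have : (fun m => ‖b m‖ ^ 2 * r ^ (2 * m))
      = fun m => (‖b m‖ * r ^ m) ^ 2 := by
    funext m
    rw [mul_pow, ← pow_mul, Nat.mul_comm m 2]
  rw [this]
  exact h2

/-- If `F` is a one-to-one analytic map of the unit disk onto a simply
connected domain `Ω` and `G = ∑ bₙ zⁿ` is an analytic square root of `F'`,
then `r⁻¹ · Length ∂F(r𝔻) = 2π ∑ |bₙ|² r^{2n}`, where
`Length ∂F(r𝔻) = ∫_{|z|=r} |F'(z)| |dz|`; consequently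
`r ↦ r⁻¹ Length ∂F(r𝔻)` is strictly increasing on `(0,1)` unless `F` is
linear. -/
theorem perimeter_schwarz (F : ℂ → ℂ) (Ω : Set ℂ)
    (hF : DifferentiableOn ℂ F (ball (0 : ℂ) 1))
    (hinj : Set.InjOn F (ball (0 : ℂ) 1))
    (hΩ : F '' ball (0 : ℂ) 1 = Ω)
    (hsc : SimplyConnectedSpace Ω)
    (G : ℂ → ℂ) (hG : DifferentiableOn ℂ G (ball (0 : ℂ) 1))
    (hsq : ∀ z ∈ ball (0 : ℂ) 1, G z ^ 2 = deriv F z)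
    (b : ℕ → ℂ) (hb : ∀ z ∈ ball (0 : ℂ) 1, G z = ∑' m : ℕ, b m * z ^ m) :
    (∀ r ∈ Set.Ioo (0 : ℝ) 1,
      r⁻¹ * ∫ θ in (0 : ℝ)..2 * Real.pi,
          ‖deriv F (r * Complex.exp (θ * Complex.I))‖ * r =
        2 * Real.pi * ∑' m : ℕ, ‖b m‖ ^ 2 * r ^ (2 * m)) ∧
    (¬ (∃ a c : ℂ, ∀ z ∈ ball (0 : ℂ) 1, F z = a * z + c) →
      StrictMonoOn
        (fun r : ℝ => r⁻¹ * ∫ θ in (0 : ℝ)..2 * Real.pi,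
          ‖deriv F (r * Complex.exp (θ * Complex.I))‖ * r)
        (Set.Ioo 0 1)) := by
  have key : ∀ r ∈ Set.Ioo (0 : ℝ) 1,
      r⁻¹ * ∫ θ in (0 : ℝ)..2 * Real.pi,
          ‖deriv F (r * Complex.exp (θ * Complex.I))‖ * r =
        2 * Real.pi * ∑' m : ℕ, ‖b m‖ ^ 2 * r ^ (2 * m) := by
    intro r hr
    obtain ⟨hr0, hr1⟩ := hr
    have hsum : Summable (fun m => ‖b m‖ * r ^ m) :=
      aux_summable hF hinj hG hsq hb ⟨hr0, hr1⟩
    set c : ℕ → ℂ := fun m => b m * ((r : ℂ)) ^ m with hc_def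
    have hceq : ∀ m, ‖c m‖ = ‖b m‖ * r ^ m := by
      intro m
      rw [hc_def]
      simp [map_mul, map_pow, Complex.norm_real, abs_of_pos hr0]
    have hc : Summable fun m => ‖c m‖ := by
      rw [show (fun m => ‖c m‖) = fun m => ‖b m‖ * r ^ m from
        funext hceq]
      exact hsum
    have hpoint : ∀ θ : ℝ,
        ‖deriv F (r * Complex.exp (θ * Complex.I))‖ * r
          = ‖∑' m : ℕ, c m * Complex.exp (θ * Complex.I) ^ m‖ ^ 2 * r := by
      intro θ
      have hzball : (r : ℂ) * Complex.exp (θ * Complex.I) ∈ ball (0 : ℂ) 1 := by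
        simp only [mem_ball, Complex.dist_eq, sub_zero, norm_mul,
          Complex.norm_real, Complex.norm_exp_ofReal_mul_I, mul_one, Real.norm_of_nonneg hr0.le]
        exact hr1
      congr 1
      rw [← hsq _ hzball, norm_pow, hb _ hzball]
      congr 2
      apply tsum_congr
      intro m
      rw [hc_def]
      rw [mul_pow]
      ring
    calc r⁻¹ * ∫ θ in (0 : ℝ)..2 * Real.pi,
          ‖deriv F (r * Complex.exp (θ * Complex.I))‖ * r
        = r⁻¹ * ∫ θ in (0 : ℝ)..2 * Real.pi,
          ‖∑' m : ℕ, c m * Complex.exp (θ * Complex.I) ^ m‖ ^ 2 * r := by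
          rw [intervalIntegral.integral_congr (g :=
            fun θ => ‖∑' m : ℕ, c m * Complex.exp (θ * Complex.I) ^ m‖ ^ 2 * r)
            (fun θ _ => hpoint θ)]
      _ = r⁻¹ * ((∫ θ in (0 : ℝ)..2 * Real.pi,
          ‖∑' m : ℕ, c m * Complex.exp (θ * Complex.I) ^ m‖ ^ 2) * r) := by
          rw [intervalIntegral.integral_mul_const]
      _ = ∫ θ in (0 : ℝ)..2 * Real.pi,
          ‖∑' m : ℕ, c m * Complex.exp (θ * Complex.I) ^ m‖ ^ 2 := by
          rw [← mul_assoc, mul_comm r⁻¹, mul_assoc, inv_mul_cancel₀ hr0.ne', mul_one]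
      _ = 2 * Real.pi * ∑' m : ℕ, ‖c m‖ ^ 2 := aux_parseval c hc
      _ = 2 * Real.pi * ∑' m : ℕ, ‖b m‖ ^ 2 * r ^ (2 * m) := by
          congr 1
          apply tsum_congr
          intro m
          rw [hceq m, mul_pow, ← pow_mul, Nat.mul_comm m 2]
  refine ⟨key, ?_⟩
  intro hnl
  have hex : ∃ m, m ≠ 0 ∧ b m ≠ 0 := by
    by_contra h
    push_neg at h
    apply hnl
    refine ⟨(b 0) ^ 2, F 0, ?_⟩
    apply aux_linear hF
    intro z hz
    rw [← hsq z hz]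
    congr 1
    rw [hb z hz]
    rw [tsum_eq_single 0 (fun m hm => by rw [h m hm]; ring)]
    ring
  obtain ⟨m₀, hm₀, hbm₀⟩ := hex
  intro r1 h1 r2 h2 h12
  simp only
  rw [key r1 h1, key r2 h2]
  have hS1 : Summable fun m => ‖b m‖ ^ 2 * r1 ^ (2 * m) :=
    aux_sq_summable h1.1.le (aux_summable hF hinj hG hsq hb h1)
  have hS2 : Summable fun m => ‖b m‖ ^ 2 * r2 ^ (2 * m) :=
    aux_sq_summable h2.1.le (aux_summable hF hinj hG hsq hb h2)
  have two_pi_pos : (0 : ℝ) < 2 * Real.pi := by positivity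
  apply mul_lt_mul_of_pos_left _ two_pi_pos
  apply Summable.tsum_lt_tsum_of_nonneg (i := m₀)
  · intro m
    exact mul_nonneg (by positivity) (pow_nonneg h1.1.le _)
  · intro m
    apply mul_le_mul_of_nonneg_left _ (by positivity)
    exact pow_le_pow_left₀ h1.1.le h12.le _
  · apply mul_lt_mul_of_pos_left _ (pow_pos (norm_pos_iff.mpr hbm₀) 2)
    exact pow_lt_pow_left₀ h12 h1.1.le (by simpa using hm₀)
  · exact hS2
end
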